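/- arXiv:2201.00476 — 4 statements merged into one kernel-verified Lean document; each statement's English description precedes it below -/
import Mathlib

section
/- Let R = K[X_0,...,X_n] over an algebraically closed field K, let P_1,...,P_r,P be distinct points in P^n with P = (1,0,...,0), so its defining ideal is ℘ = (X_1,...,X_n). Set J = ℘_1^{m_1} ∩ ... ∩ ℘_r^{m_r} for positive integers m_1,...,m_r, and let a, b be positive integers. Then reg(R/(J+℘^a)) ≤ b if and only if X_0^{b-i}·M ∈ J + ℘^{i+1} for every monomial M of degree i in X_1,...,X_n and every i = 0,...,a-1. -/
open MvPolynomial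

noncomputable section

/-- The defining prime ideal of the point of projective space with homogeneous
coordinates `p`: the ideal generated by the linear forms vanishing at `p`. -/
def pointIdeal {K : Type} [Field K] {N : ℕ} (p : Fin N → K) :
    Ideal (MvPolynomial (Fin N) K) :=
  Ideal.span {f | f.IsHomogeneous 1 ∧ eval p f = 0}

/-- The ideal of the fat point scheme `m₁P₁ + ⋯ + m_sP_s`. -/
def fatIdeal {K : Type} [Field K] {N s : ℕ} (p : Fin s → Fin N → K) (m : Fin s → ℕ) :
    Ideal (MvPolynomial (Fin N) K) :=
  ⨅ i, pointIdeal (p i) ^ (m i)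

/-- `dim_K` of the degree-`t` graded piece of the ideal `I`. -/
def gradedDim (K : Type) [Field K] {N : ℕ} (I : Ideal (MvPolynomial (Fin N) K)) (t : ℕ) : ℕ :=
  Module.finrank K ↥(homogeneousSubmodule (Fin N) K t ⊓ I.restrictScalars K)

/-- The Hilbert function of `R/I` in degree `t`. -/
def hilbFn (K : Type) [Field K] {N : ℕ} (I : Ideal (MvPolynomial (Fin N) K)) (t : ℕ) : ℕ :=
  Module.finrank K ↥(homogeneousSubmodule (Fin N) K t) - gradedDim K I t

/-- The regularity index of `R/I` relative to the multiplicity `e`: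
the least `t` with `H_{R/I}(t) = e`. -/
def regIndex (K : Type) [Field K] {N : ℕ} (I : Ideal (MvPolynomial (Fin N) K)) (e : ℕ) : ℕ :=
  sInf {t | hilbFn K I t = e}

/-- The multiplicity `e(R/I) = ∑ C(mᵢ+n-1, n)` of a fat point scheme in `ℙⁿ`. -/
def fatMult (n : ℕ) {s : ℕ} (m : Fin s → ℕ) : ℕ :=
  ∑ i, (m i + n - 1).choose n

/-- The regularity index of the fat point scheme `m₁P₁ + ⋯ + m_sP_s` in `ℙⁿ`. -/
def regFat (K : Type) [Field K] {n s : ℕ} (p : Fin s → Fin (n + 1) → K) (m : Fin s → ℕ) : ℕ :=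
  regIndex K (fatIdeal p m) (fatMult n m)

/-- The coordinate vectors `p i` represent distinct points of projective space. -/
def ProjDistinct {K : Type} [Field K] {N s : ℕ} (p : Fin s → Fin N → K) : Prop :=
  (∀ i, p i ≠ 0) ∧ ∀ i j, i ≠ j → ∀ c : K, p i ≠ c • p j

/-- The points `p i`, `i ∈ Q`, lie on a `j`-dimensional linear subspace of `ℙⁿ`. -/
def OnLinearSubspace {K : Type} [Field K] {N s : ℕ} (p : Fin s → Fin N → K)
    (Q : Finset (Fin s)) (j : ℕ) : Prop :=
  ∃ W : Submodule K (Fin N → K), Module.finrank K ↥W ≤ j + 1 ∧ ∀ i ∈ Q, p i ∈ W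

open Classical in
/-- The Segre bound `T(Z) = max {T_j(Z) | j = 1,…,n}` for fat points in `ℙⁿ`. -/
def segreBound {K : Type} [Field K] (n : ℕ) {s : ℕ} (p : Fin s → Fin (n + 1) → K)
    (m : Fin s → ℕ) : ℕ :=
  (Finset.Icc 1 n).sup fun j =>
    Finset.univ.powerset.sup fun Q =>
      if Q.Nonempty ∧ OnLinearSubspace p Q j then (∑ i ∈ Q, m i + j - 2) / j else 0

/-- The standard coordinate point `(1,0,…,0)`. -/
def stdPt (K : Type) [Field K] (N : ℕ) : Fin N → K := fun j => if (j : ℕ) = 0 then 1 else 0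

namespace CTV


variable {K : Type} [Field K] {n : ℕ}

/-- weight in the variables `X_1, …, X_n` -/
def wt {n : ℕ} (d : Fin (n + 1) →₀ ℕ) : ℕ := ∑ j ∈ Finset.univ.erase 0, d j

lemma wt_add {n : ℕ} (d e : Fin (n + 1) →₀ ℕ) : wt (d + e) = wt d + wt e := by
  simp [wt, Finset.sum_add_distrib]

lemma sum_univ_eq {n : ℕ} (d : Fin (n + 1) →₀ ℕ) : (∑ j, d j) = d 0 + wt d := by
  rw [wt, Finset.add_sum_erase _ _ (Finset.mem_univ 0)]

lemma degree_eq_sum_univ {n : ℕ} (d : Fin (n + 1) →₀ ℕ) :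
    Finsupp.degree d = ∑ j, d j := by
  rw [Finsupp.degree]
  exact Finset.sum_subset (Finset.subset_univ _)
    (fun j _ hj => Finsupp.notMem_support_iff.mp hj)

lemma single_add_sub {n : ℕ} (j : Fin (n + 1)) (k : ℕ) (d : Fin (n + 1) →₀ ℕ)
    (h : k ≤ d j) : Finsupp.single j k + (d - Finsupp.single j k) = d := by
  ext j'
  by_cases hj : j = j'
  · subst hj
    simp only [Finsupp.add_apply, Finsupp.tsub_apply, Finsupp.single_eq_same]
    omega
  · simp [Finsupp.single_eq_of_ne' hj]

lemma stdPt_zero : stdPt K (n + 1) 0 = 1 := by simp [stdPt]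

lemma stdPt_ne_zero {j : Fin (n + 1)} (hj : j ≠ 0) : stdPt K (n + 1) j = 0 := by
  simp only [stdPt]
  rw [if_neg]
  exact fun h => hj (Fin.ext h)

lemma X_mem_pointIdeal {j : Fin (n + 1)} (hj : j ≠ 0) :
    X j ∈ pointIdeal (stdPt K (n + 1)) := by
  apply Ideal.subset_span
  exact ⟨isHomogeneous_X _ _, by simp [stdPt_ne_zero hj]⟩

lemma monomial_mem_pow (k : ℕ) :
    ∀ (d : Fin (n + 1) →₀ ℕ) (c : K), k ≤ wt d →
      monomial d c ∈ pointIdeal (stdPt K (n + 1)) ^ k := by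
  induction k with
  | zero => intro d c _; simp [Ideal.one_eq_top]
  | succ k ih =>
    intro d c hk
    have hex : ∃ j ∈ Finset.univ.erase 0, d j ≠ 0 := by
      by_contra h
      push_neg at h
      have : wt d = 0 := Finset.sum_eq_zero fun j hj => h j hj
      omega
    obtain ⟨j, hj, hdj⟩ := hex
    have hj0 : j ≠ 0 := (Finset.mem_erase.mp hj).1
    set d' := d - Finsupp.single j 1 with hd'
    have hrec : Finsupp.single j 1 + d' = d := single_add_sub j 1 d (by omega)
    have hwt : wt d = 1 + wt d' := by
      rw [← hrec, wt_add]
      congr 1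
      rw [wt]
      rw [Finset.sum_eq_single j (fun b _ hb => Finsupp.single_eq_of_ne' (Ne.symm hb))
        (fun h => absurd hj h)]
      simp
    have heq : monomial d' c * X j = monomial d c := by
      rw [X, monomial_mul, mul_one, add_comm d', hrec]
    rw [← heq, pow_succ]
    exact Ideal.mul_mem_mul (ih d' c (by omega)) (X_mem_pointIdeal hj0)





variable {K : Type} [Field K] {n : ℕ}

/-- The ideal of polynomials all whose monomials have `wt ≥ k`. -/
def wtIdeal (K : Type) [Field K] (n k : ℕ) : Ideal (MvPolynomial (Fin (n + 1)) K) where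
  carrier := {f | ∀ d, coeff d f ≠ 0 → k ≤ wt d}
  zero_mem' := by intro d hd; simp at hd
  add_mem' := by
    intro f g hf hg d hd
    by_cases h : coeff d f ≠ 0
    · exact hf d h
    · push_neg at h
      refine hg d ?_
      rw [coeff_add, h, zero_add] at hd
      exact hd
  smul_mem' := by
    intro c f hf d hd
    rw [smul_eq_mul] at hd
    have hds : d ∈ (c * f).support := by rwa [mem_support_iff]
    have := MvPolynomial.support_mul c f hds
    rw [Finset.mem_add] at this
    obtain ⟨u, hu, v, hv, huv⟩ := this
    have h1 : k ≤ wt v := hf v (mem_support_iff.mp hv)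
    have : wt d = wt u + wt v := by rw [← huv, wt_add]
    omega

lemma mem_wtIdeal {k : ℕ} {f : MvPolynomial (Fin (n + 1)) K} :
    f ∈ wtIdeal K n k ↔ ∀ d, coeff d f ≠ 0 → k ≤ wt d := Iff.rfl

/-- a `wt`-zero multidegree is supported at `0` -/
lemma wt_eq_zero {d : Fin (n + 1) →₀ ℕ} (h : wt d = 0) : d = Finsupp.single 0 (d 0) := by
  ext j
  by_cases hj : j = 0
  · subst hj; simp
  · rw [Finsupp.single_eq_of_ne' (Ne.symm hj)]
    rw [wt, Finset.sum_eq_zero_iff] at h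
    exact h j (Finset.mem_erase.mpr ⟨hj, Finset.mem_univ j⟩)

lemma pointIdeal_le_wtIdeal : pointIdeal (stdPt K (n + 1)) ≤ wtIdeal K n 1 := by
  rw [pointIdeal, Ideal.span_le]
  rintro f ⟨hhom, heval⟩ d hd
  by_contra hwt
  have hwt0 : wt d = 0 := by omega
  -- then d = single 0 1, and eval at stdPt equals coeff d f ≠ 0
  have hdeg : Finsupp.degree d = 1 := by rw [Finsupp.degree_eq_weight_one]; exact hhom hd
  have hd1 : d = Finsupp.single 0 1 := by
    have h0 : d 0 = 1 := by
      have := sum_univ_eq d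
      rw [degree_eq_sum_univ] at hdeg
      omega
    rw [wt_eq_zero hwt0, h0]
  -- compute the evaluation
  have hprod : ∀ e : Fin (n + 1) →₀ ℕ, (∏ j, stdPt K (n + 1) j ^ e j)
      = if wt e = 0 then 1 else 0 := by
    intro e
    by_cases he : wt e = 0
    · rw [if_pos he]
      refine Finset.prod_eq_one fun j _ => ?_
      by_cases hj : j = 0
      · subst hj; rw [stdPt_zero, one_pow]
      · have : e j = 0 := by
          have := wt_eq_zero he
          rw [this, Finsupp.single_eq_of_ne' (Ne.symm hj)]
        rw [this, pow_zero]
    · rw [if_neg he]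
      have : ∃ j ∈ Finset.univ.erase 0, e j ≠ 0 := by
        by_contra hc; push_neg at hc
        exact he (Finset.sum_eq_zero hc)
      obtain ⟨j, hj, hej⟩ := this
      refine Finset.prod_eq_zero (Finset.mem_univ j) ?_
      rw [stdPt_ne_zero (Finset.mem_erase.mp hj).1, zero_pow hej]
  have heval' : eval (stdPt K (n + 1)) f = coeff d f := by
    rw [eval_eq']
    rw [Finset.sum_eq_single d]
    · rw [hprod, if_pos hwt0, mul_one]
    · intro e hes hne
      rw [hprod]
      have : ¬ wt e = 0 := by
        intro h0
        have hdeg' : Finsupp.degree e = 1 := by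
          rw [Finsupp.degree_eq_weight_one]; exact hhom (mem_support_iff.mp hes)
        have h1 : e 0 = 1 := by
          have := sum_univ_eq e
          rw [degree_eq_sum_univ] at hdeg'
          omega
        exact hne (by rw [wt_eq_zero h0, h1, hd1])
      rw [if_neg this, mul_zero]
    · intro hds
      rw [notMem_support_iff.mp hds, zero_mul]
  exact hd (by rw [← heval', heval])

lemma pow_le_wtIdeal (k : ℕ) : pointIdeal (stdPt K (n + 1)) ^ k ≤ wtIdeal K n k := by
  induction k with
  | zero =>
    intro f _ d hd
    exact Nat.zero_le _
  | succ k ih =>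
    rw [pow_succ]
    refine Ideal.mul_le.mpr fun f hf g hg => ?_
    intro d hd
    have hds : d ∈ (f * g).support := mem_support_iff.mpr hd
    have := MvPolynomial.support_mul f g hds
    rw [Finset.mem_add] at this
    obtain ⟨u, hu, v, hv, huv⟩ := this
    have h1 : k ≤ wt u := ih hf u (mem_support_iff.mp hu)
    have h2 : 1 ≤ wt v := pointIdeal_le_wtIdeal hg v (mem_support_iff.mp hv)
    have : wt d = wt u + wt v := by rw [← huv, wt_add]
    omega



attribute [local instance] MvPolynomial.gradedAlgebra

lemma pointIdeal_isHomogeneous {N : ℕ} (q : Fin N → K) :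
    (pointIdeal q).IsHomogeneous (homogeneousSubmodule (Fin N) K) := by
  apply Ideal.homogeneous_span
  rintro x ⟨hx, -⟩
  exact ⟨1, hx⟩

lemma Ideal.isHomogeneous_pow {N : ℕ} {I : Ideal (MvPolynomial (Fin N) K)}
    (h : I.IsHomogeneous (homogeneousSubmodule (Fin N) K)) (k : ℕ) :
    (I ^ k).IsHomogeneous (homogeneousSubmodule (Fin N) K) := by
  induction k with
  | zero => rw [pow_zero, Ideal.one_eq_top]; exact Ideal.IsHomogeneous.top _
  | succ k ih => rw [pow_succ]; exact ih.mul h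

lemma sum_univ_single_one (j : Fin (n + 1)) :
    (∑ j', (Finsupp.single j (1 : ℕ)) j') = 1 := by
  simp [Finsupp.single_apply, Finset.sum_ite_eq]

lemma degree_of_isHomogeneous {f : MvPolynomial (Fin (n + 1)) K} {t : ℕ}
    (hf : f.IsHomogeneous t) {d : Fin (n + 1) →₀ ℕ} (hd : coeff d f ≠ 0) :
    Finsupp.degree d = t := by
  rw [Finsupp.degree_eq_weight_one]; exact hf hd

instance fdHomog (t : ℕ) : FiniteDimensional K ↥(homogeneousSubmodule (Fin (n + 1)) K t) := by
  have hfin : {d : Fin (n + 1) →₀ ℕ | Finsupp.degree d ≤ t}.Finite :=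
    Finsupp.finite_of_degree_le t
  have hle : homogeneousSubmodule (Fin (n + 1)) K t ≤
      Submodule.span K ((fun d => (monomial d (1 : K))) '' {d | Finsupp.degree d ≤ t}) := by
    intro f hf
    rw [mem_homogeneousSubmodule] at hf
    nth_rewrite 1 [f.as_sum]
    refine Submodule.sum_mem _ fun d hd => ?_
    have h1 : monomial d (coeff d f) = (coeff d f) • monomial d (1 : K) := by
      rw [smul_monomial, smul_eq_mul, mul_one]
    rw [h1]
    refine Submodule.smul_mem _ _ (Submodule.subset_span ?_)
    exact ⟨d, le_of_eq (degree_of_isHomogeneous hf (mem_support_iff.mp hd)), rfl⟩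
  have hfd : FiniteDimensional K
      (Submodule.span K ((fun d => (monomial d (1 : K))) '' {d | Finsupp.degree d ≤ t})) :=
    FiniteDimensional.span_of_finite K (hfin.image _)
  exact Submodule.finiteDimensional_of_le hle

/-- the predicate: every homogeneous polynomial of degree `t` is in `I`. -/
def Smem (I : Ideal (MvPolynomial (Fin (n + 1)) K)) (t : ℕ) : Prop :=
  ∀ f : MvPolynomial (Fin (n + 1)) K, f.IsHomogeneous t → f ∈ I

lemma hilbFn_eq_zero_iff {I : Ideal (MvPolynomial (Fin (n + 1)) K)} {t : ℕ} :
    hilbFn K I t = 0 ↔ Smem I t := by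
  have hmem : Smem I t ↔ homogeneousSubmodule (Fin (n + 1)) K t ≤ I.restrictScalars K := by
    constructor
    · intro h f hf
      exact h f ((mem_homogeneousSubmodule _ _).mp hf)
    · intro h f hf
      exact h ((mem_homogeneousSubmodule _ _).mpr hf)
  rw [hmem, hilbFn, gradedDim]
  constructor
  · intro h
    have heq := Submodule.eq_of_le_of_finrank_le
      (inf_le_left (a := homogeneousSubmodule (Fin (n + 1)) K t) (b := I.restrictScalars K))
      (Nat.le_of_sub_eq_zero h)
    exact heq ▸ inf_le_right
  · intro h
    rw [inf_eq_left.mpr h, Nat.sub_self]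

lemma Smem.succ {I : Ideal (MvPolynomial (Fin (n + 1)) K)} {t : ℕ}
    (h : Smem I t) : Smem I (t + 1) := by
  intro f hf
  nth_rewrite 1 [f.as_sum]
  refine Ideal.sum_mem _ fun d hd => ?_
  have hdeg : Finsupp.degree d = t + 1 := degree_of_isHomogeneous hf (mem_support_iff.mp hd)
  have hex : ∃ j, d j ≠ 0 := by
    by_contra hc; push_neg at hc
    have hd0 : d = 0 := Finsupp.ext hc
    rw [hd0, map_zero] at hdeg
    omega
  obtain ⟨j, hj⟩ := hex
  have hrec := single_add_sub j 1 d (by omega)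
  set d' := d - Finsupp.single j 1 with hd'
  have heq : monomial d' (coeff d f) * X j = monomial d (coeff d f) := by
    rw [X, monomial_mul, mul_one, add_comm d', hrec]
  rw [← heq]
  refine Ideal.mul_mem_right _ _ (h _ (isHomogeneous_monomial _ ?_))
  have h1 : Finsupp.degree d = 1 + Finsupp.degree d' := by
    rw [degree_eq_sum_univ, degree_eq_sum_univ, ← hrec]
    rw [show (∑ j', ((Finsupp.single j 1 + d') : Fin (n+1) →₀ ℕ) j')
        = (∑ j', (Finsupp.single j (1:ℕ)) j') + ∑ j', d' j' by
      rw [← Finset.sum_add_distrib]; rfl]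
    rw [sum_univ_single_one]
  omega

lemma Smem.mono {I : Ideal (MvPolynomial (Fin (n + 1)) K)} {t t' : ℕ}
    (htt : t ≤ t') (h : Smem I t) : Smem I t' := by
  induction t', htt using Nat.le_induction with
  | base => exact h
  | succ t' _ ih => exact ih.succ

lemma exists_linear (q : Fin (n + 1) → K) (hq : ∀ c : K, q ≠ c • stdPt K (n + 1)) :
    ∃ (L : MvPolynomial (Fin (n + 1)) K) (c : K), c ≠ 0 ∧ L ∈ pointIdeal q ∧
      L - C c * X 0 ∈ pointIdeal (stdPt K (n + 1)) := by
  by_cases h0 : q 0 = 0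
  · refine ⟨X 0, 1, one_ne_zero, Ideal.subset_span ⟨isHomogeneous_X _ _, by simp [h0]⟩, ?_⟩
    simp
  · have hex : ∃ j, j ≠ 0 ∧ q j ≠ 0 := by
      by_contra hc; push_neg at hc
      refine hq (q 0) (funext fun j => ?_)
      by_cases hj : j = 0
      · subst hj; simp [stdPt_zero]
      · rw [hc j hj]
        simp [stdPt_ne_zero hj]
    obtain ⟨j, hj, hqj⟩ := hex
    refine ⟨C (q 0) * X j - C (q j) * X 0, -(q j), neg_ne_zero.mpr hqj, ?_, ?_⟩
    · refine Ideal.subset_span ⟨((isHomogeneous_X K j).C_mul _).sub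
        ((isHomogeneous_X K 0).C_mul _), ?_⟩
      simp only [map_sub, map_mul, eval_C, eval_X]
      ring
    · have heq : C (q 0) * X j - C (q j) * X 0 - C (-(q j)) * X 0 = C (q 0) * X j := by
        rw [map_neg]; ring
      rw [heq]
      exact Ideal.mul_mem_left _ _ (X_mem_pointIdeal hj)

lemma add_pow_mem {A P : Ideal (MvPolynomial (Fin (n + 1)) K)}
    {f g : MvPolynomial (Fin (n + 1)) K} (hf : f ∈ A) (hg : g ∈ P) (a : ℕ) :
    (f + g) ^ a ∈ A ⊔ P ^ a := by
  rw [add_pow, Finset.sum_range_succ']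
  refine Submodule.add_mem _
    (Ideal.mem_sup_left (Ideal.sum_mem _ fun k _ => ?_)) (Ideal.mem_sup_right ?_)
  · have h1 : f ^ (k + 1) * g ^ (a - (k + 1)) * ((a.choose (k + 1) : ℕ) :
        MvPolynomial (Fin (n + 1)) K)
        = f * (f ^ k * g ^ (a - (k + 1)) * ((a.choose (k + 1) : ℕ) :
        MvPolynomial (Fin (n + 1)) K)) := by ring
    rw [h1]
    exact Ideal.mul_mem_right _ _ hf
  · simpa using Ideal.pow_mem_pow hg a

lemma exists_X0_pow {r : ℕ} (p : Fin r → Fin (n + 1) → K) (m : Fin r → ℕ)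
    (hdist : ∀ i, ∀ c : K, p i ≠ c • stdPt K (n + 1)) :
    ∃ (F G : MvPolynomial (Fin (n + 1)) K), F ∈ fatIdeal p m ∧
      G ∈ pointIdeal (stdPt K (n + 1)) ∧ X 0 ^ (∑ i, m i) = F + G := by
  have hchoice : ∀ i : Fin r, ∃ (L : MvPolynomial (Fin (n + 1)) K) (c : K),
      c ≠ 0 ∧ L ∈ pointIdeal (p i) ∧ L - C c * X 0 ∈ pointIdeal (stdPt K (n + 1)) :=
    fun i => exists_linear (p i) (hdist i)
  choose L c hc hL hLc using hchoice
  set cc : K := ∏ i, (c i) ^ (m i) with hcc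
  have hcc0 : cc ≠ 0 := Finset.prod_ne_zero_iff.mpr fun i _ => pow_ne_zero _ (hc i)
  set P : MvPolynomial (Fin (n + 1)) K := ∏ i, (L i) ^ (m i) with hP
  have hPJ : P ∈ fatIdeal p m := by
    rw [fatIdeal, Ideal.mem_iInf]
    intro i
    rw [hP, ← Finset.prod_erase_mul _ _ (Finset.mem_univ i)]
    exact Ideal.mul_mem_left _ _ (Ideal.pow_mem_pow (hL i) (m i))
  have hpoly : (∏ i, (C (c i) * X (0 : Fin (n + 1))) ^ (m i))
      = C cc * X 0 ^ (∑ i, m i) := by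
    rw [hcc, map_prod, ← Finset.prod_pow_eq_pow_sum, ← Finset.prod_mul_distrib]
    exact Finset.prod_congr rfl fun i _ => by rw [mul_pow, map_pow]
  have key : P - C cc * X 0 ^ (∑ i, m i) ∈ pointIdeal (stdPt K (n + 1)) := by
    have hmk : Ideal.Quotient.mk (pointIdeal (stdPt K (n + 1))) P
        = Ideal.Quotient.mk (pointIdeal (stdPt K (n + 1)))
          (∏ i, (C (c i) * X (0 : Fin (n + 1))) ^ (m i)) := by
      rw [hP, map_prod, map_prod]
      exact Finset.prod_congr rfl fun i _ => by
        rw [map_pow, map_pow, Ideal.Quotient.eq.mpr (hLc i)]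
    have := Ideal.Quotient.eq.mp hmk
    rwa [hpoly] at this
  refine ⟨C cc⁻¹ * P, -(C cc⁻¹ * (P - C cc * X 0 ^ (∑ i, m i))), Ideal.mul_mem_left _ _ hPJ,
    Submodule.neg_mem _ (Ideal.mul_mem_left _ _ key), ?_⟩
  have hCinv : (C cc⁻¹ : MvPolynomial (Fin (n + 1)) K) * C cc = 1 := by
    rw [← map_mul, inv_mul_cancel₀ hcc0, map_one]
  have hfin : C cc⁻¹ * P + -(C cc⁻¹ * (P - C cc * X 0 ^ (∑ i, m i)))
      = (C cc⁻¹ * C cc) * X 0 ^ (∑ i, m i) := by ring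
  rw [hfin, hCinv, one_mul]

lemma exists_smem {r : ℕ} (p : Fin r → Fin (n + 1) → K) (m : Fin r → ℕ)
    (hdist : ∀ i, ∀ c : K, p i ≠ c • stdPt K (n + 1)) (a : ℕ) :
    ∃ T, Smem (fatIdeal p m ⊔ pointIdeal (stdPt K (n + 1)) ^ a) T := by
  obtain ⟨F, G, hF, hG, hFG⟩ := exists_X0_pow p m hdist
  set N : ℕ := ∑ i, m i with hN
  have hXN : X (0 : Fin (n + 1)) ^ (N * a)
      ∈ fatIdeal p m ⊔ pointIdeal (stdPt K (n + 1)) ^ a := by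
    rw [pow_mul, hFG]
    exact add_pow_mem hF hG a
  refine ⟨N * a + a, ?_⟩
  intro f hf
  nth_rewrite 1 [f.as_sum]
  refine Ideal.sum_mem _ fun d hd => ?_
  have hdeg : (∑ j, d j) = N * a + a := by
    rw [← degree_eq_sum_univ]
    exact degree_of_isHomogeneous hf (mem_support_iff.mp hd)
  by_cases hw : a ≤ wt d
  · exact Ideal.mem_sup_right (monomial_mem_pow a d _ hw)
  · have hd0 : N * a ≤ d 0 := by have := sum_univ_eq d; omega
    have hrec := single_add_sub 0 (N * a) d hd0
    have heq : X (0 : Fin (n + 1)) ^ (N * a)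
        * monomial (d - Finsupp.single 0 (N * a)) (coeff d f) = monomial d (coeff d f) := by
      rw [X_pow_eq_monomial, monomial_mul, one_mul, hrec]
    rw [← heq]
    exact Ideal.mul_mem_right _ _ hXN

lemma down_induction {r : ℕ} (p : Fin r → Fin (n + 1) → K) (m : Fin r → ℕ) (a b : ℕ)
    (Hcond : ∀ i < a, ∀ d : Fin (n + 1) →₀ ℕ, d 0 = 0 → (∑ j, d j) = i →
        X (0 : Fin (n + 1)) ^ (b - i) * monomial d (1 : K) ∈
          fatIdeal p m ⊔ pointIdeal (stdPt K (n + 1)) ^ (i + 1)) :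
    ∀ q : ℕ, ∀ f : MvPolynomial (Fin (n + 1)) K, f.IsHomogeneous b →
      (∀ d, coeff d f ≠ 0 → a - q ≤ wt d) →
      f ∈ fatIdeal p m ⊔ pointIdeal (stdPt K (n + 1)) ^ a := by
  intro q
  induction q with
  | zero =>
    intro f hf hwt
    refine Ideal.mem_sup_right ?_
    nth_rewrite 1 [f.as_sum]
    exact Ideal.sum_mem _ fun d hd =>
      monomial_mem_pow a d _ (by simpa using hwt d (mem_support_iff.mp hd))
  | succ q ih =>
    intro f hf hwt
    by_cases hq : a ≤ q
    · refine ih f hf fun d hd => ?_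
      have := hwt d hd
      omega
    · push_neg at hq
      set k := a - (q + 1) with hk
      nth_rewrite 1 [f.as_sum]
      refine Ideal.sum_mem _ fun d hd => ?_
      have hcd : coeff d f ≠ 0 := mem_support_iff.mp hd
      have hwd : k ≤ wt d := hwt d hcd
      have hdeg : (∑ j, d j) = b := by
        rw [← degree_eq_sum_univ]
        exact degree_of_isHomogeneous hf hcd
      have hmono : (monomial d (coeff d f)).IsHomogeneous b :=
        isHomogeneous_monomial _ (by rw [degree_eq_sum_univ]; exact hdeg)
      by_cases hcase : k + 1 ≤ wt d
      · refine ih (monomial d (coeff d f)) hmono fun e he => ?_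
        have hed : d = e := by
          by_contra hne
          rw [coeff_monomial, if_neg hne] at he
          exact he rfl
        subst hed
        omega
      · have hwdk : wt d = k := by omega
        have hd0 : d 0 = b - k := by have := sum_univ_eq d; omega
        set d' := Finsupp.erase 0 d with hd'
        have hd'0 : d' 0 = 0 := Finsupp.erase_same
        have hwt' : wt d' = wt d := by
          refine Finset.sum_congr rfl fun j hj => ?_
          exact Finsupp.erase_ne (Finset.mem_erase.mp hj).1
        have hsum' : (∑ j, d' j) = k := by
          have h1 := sum_univ_eq d'
          rw [hd'0, hwt', hwdk] at h1
          omega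
        have hx := Hcond k (by omega) d' hd'0 hsum'
        have hrec : Finsupp.single 0 (b - k) + d' = d := by
          ext j
          by_cases hj : j = 0
          · subst hj
            simp only [Finsupp.add_apply, Finsupp.single_eq_same, hd'0, hd0, add_zero]
          · simp only [Finsupp.add_apply, Finsupp.single_eq_of_ne' (Ne.symm hj),
              Finsupp.erase_ne hj, zero_add, hd']
        have heq : C (coeff d f) * (X (0 : Fin (n + 1)) ^ (b - k) * monomial d' 1)
            = monomial d (coeff d f) := by
          rw [X_pow_eq_monomial, monomial_mul, one_mul, C_mul_monomial, mul_one, hrec]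
        have hmem : monomial d (coeff d f)
            ∈ fatIdeal p m ⊔ pointIdeal (stdPt K (n + 1)) ^ (k + 1) := by
          rw [← heq]
          exact Ideal.mul_mem_left _ _ hx
        obtain ⟨u, hu, v, hv, huv⟩ := Submodule.mem_sup.mp hmem
        have hJhom : (fatIdeal p m).IsHomogeneous (homogeneousSubmodule (Fin (n + 1)) K) :=
          Ideal.IsHomogeneous.iInf fun i =>
            Ideal.isHomogeneous_pow (pointIdeal_isHomogeneous (p i)) (m i)
        have hPhom := Ideal.isHomogeneous_pow
          (pointIdeal_isHomogeneous (stdPt K (n + 1))) (k + 1)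
        have hub : ((DirectSum.decompose (homogeneousSubmodule (Fin (n + 1)) K) u b :
            homogeneousSubmodule (Fin (n + 1)) K b) : MvPolynomial (Fin (n + 1)) K)
            ∈ fatIdeal p m := hJhom b hu
        have hvb := hPhom b hv
        have hxb : monomial d (coeff d f)
            = ((DirectSum.decompose (homogeneousSubmodule (Fin (n + 1)) K) u b :
                homogeneousSubmodule (Fin (n + 1)) K b) : MvPolynomial (Fin (n + 1)) K)
              + ((DirectSum.decompose (homogeneousSubmodule (Fin (n + 1)) K) v b :
                homogeneousSubmodule (Fin (n + 1)) K b) : MvPolynomial (Fin (n + 1)) K) := by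
          have hmem2 : monomial d (coeff d f) ∈ homogeneousSubmodule (Fin (n + 1)) K b :=
            (mem_homogeneousSubmodule _ _).mpr hmono
          rw [← DirectSum.decompose_of_mem_same _ hmem2, ← huv]
          rw [DirectSum.decompose_add, DirectSum.add_apply]
          rfl
        rw [hxb]
        refine Submodule.add_mem _ (Ideal.mem_sup_left hub) ?_
        refine ih _ ((mem_homogeneousSubmodule _ _).mp (SetLike.coe_mem _)) fun e he => ?_
        have := pow_le_wtIdeal (k + 1) hvb e he
        omega

end CTV

/-- Lemma 2.2 (CTV): monomial criterion for `reg(R/(J+℘^a)) ≤ b` when `P = (1,0,…,0)`. -/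
theorem stmt1 {K : Type} [Field K] [IsAlgClosed K] {n r : ℕ}
    (p : Fin r → Fin (n + 1) → K)
    (hdist : ProjDistinct (Fin.snoc p (stdPt K (n + 1))))
    (m : Fin r → ℕ) (hm : ∀ i, 0 < m i) (a b : ℕ) (ha : 0 < a) (hb : 0 < b)
    (J : Ideal (MvPolynomial (Fin (n + 1)) K)) (hJ : J = fatIdeal p m) :
    regIndex K (J ⊔ pointIdeal (stdPt K (n + 1)) ^ a) 0 ≤ b ↔
      ∀ i < a, ∀ d : Fin (n + 1) →₀ ℕ, d 0 = 0 → (∑ j, d j) = i →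
        X (0 : Fin (n + 1)) ^ (b - i) * monomial d (1 : K) ∈
          J ⊔ pointIdeal (stdPt K (n + 1)) ^ (i + 1) := by
  subst hJ
  have hdist' : ∀ i, ∀ c : K, p i ≠ c • stdPt K (n + 1) := by
    intro i c
    have := hdist.2 i.castSucc (Fin.last r) (Fin.ne_of_lt (Fin.castSucc_lt_last i)) c
    simpa [Fin.snoc_castSucc, Fin.snoc_last] using this
  obtain ⟨T, hT⟩ := CTV.exists_smem p m hdist' a
  have hiff : regIndex K (fatIdeal p m ⊔ pointIdeal (stdPt K (n + 1)) ^ a) 0 ≤ b ↔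
      CTV.Smem (fatIdeal p m ⊔ pointIdeal (stdPt K (n + 1)) ^ a) b := by
    constructor
    · intro h
      have hne : {t | hilbFn K (fatIdeal p m ⊔ pointIdeal (stdPt K (n + 1)) ^ a) t = 0}.Nonempty :=
        ⟨T, CTV.hilbFn_eq_zero_iff.mpr hT⟩
      exact CTV.Smem.mono h (CTV.hilbFn_eq_zero_iff.mp (Nat.sInf_mem hne))
    · intro h
      exact Nat.sInf_le (CTV.hilbFn_eq_zero_iff.mpr h)
  rw [hiff]
  constructor
  · intro h i hi d hd0 hsum
    have hsup : fatIdeal p m ⊔ pointIdeal (stdPt K (n + 1)) ^ a ≤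
        fatIdeal p m ⊔ pointIdeal (stdPt K (n + 1)) ^ (i + 1) :=
      sup_le_sup_left (Ideal.pow_le_pow_right (by omega)) _
    by_cases hib : i ≤ b
    · have hm1 : (monomial d (1 : K)).IsHomogeneous i :=
        isHomogeneous_monomial (1 : K) (by rw [CTV.degree_eq_sum_univ]; exact hsum)
      have hx : (X (0 : Fin (n + 1)) ^ (b - i) * monomial d (1 : K)).IsHomogeneous b := by
        have := (isHomogeneous_X_pow (R := K) (0 : Fin (n + 1)) (b - i)).mul hm1
        rwa [Nat.sub_add_cancel hib] at this
      exact hsup (h _ hx)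
    · push_neg at hib
      rw [Nat.sub_eq_zero_of_le (le_of_lt hib), pow_zero, one_mul]
      have hm1 : (monomial d (1 : K)).IsHomogeneous i :=
        isHomogeneous_monomial (1 : K) (by rw [CTV.degree_eq_sum_univ]; exact hsum)
      exact hsup (CTV.Smem.mono (le_of_lt hib) h _ hm1)
  · intro H f hf
    refine CTV.down_induction p m a b H a f hf fun d hd => ?_
    omega
end
end

section
/- Let α be an (n-1)-dimensional linear subspace of P^n spanned by the coordinate points (1,0,...,0),...,(0,...,0,1,0), and let P_1,...,P_s be distinct points on α with P_s = (1,0,...,0). Let m_1,...,m_s be positive integers. Write ℘_j ⊂ R = K[X_0,...,X_n] for the defining prime ideal of P_j, and ℘_{jα} ⊂ R_α = K[X_0,...,X_{n-1}] for the defining prime ideal of the corresponding point P_{jα} ∈ P^{n-1}. Set J = ℘_1^{m_1} ∩ ... ∩ ℘_{s-1}^{m_{s-1}} and J_α = ℘_{1α}^{m_1} ∩ ... ∩ ℘_{(s-1)α}^{m_{s-1}}. If b is a non-negative integer with reg(R_α/(J_α + ℘_{sα}^{m_s})) > b, then reg(R/(J + ℘_s^{m_s})) > b. -/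
open MvPolynomial

noncomputable section

variable {K : Type} [Field K]

instance homFD (N t : ℕ) : FiniteDimensional K ↥(homogeneousSubmodule (Fin N) K t) :=
  Submodule.finiteDimensional_of_le (fun f hf => by
    rw [mem_restrictTotalDegree]
    exact (hf : MvPolynomial.IsHomogeneous f t).totalDegree_le)

lemma homog_mem_pow_span {N t : ℕ} {f : MvPolynomial (Fin N) K} (hf : f.IsHomogeneous t) :
    f ∈ (Ideal.span (Set.range (X : Fin N → MvPolynomial (Fin N) K))) ^ t := by
  set P := Ideal.span (Set.range (X : Fin N → MvPolynomial (Fin N) K))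
  have key : ∀ (s : Finset (Fin N)) (g : Fin N → ℕ),
      (∏ i ∈ s, (X i : MvPolynomial (Fin N) K) ^ g i) ∈ P ^ (∑ i ∈ s, g i) := by
    intro s
    induction s using Finset.induction with
    | empty => simp [Ideal.one_eq_top]
    | @insert a s ha ih =>
      intro g
      rw [Finset.prod_insert ha, Finset.sum_insert ha, pow_add]
      exact Ideal.mul_mem_mul (Ideal.pow_mem_pow (Ideal.subset_span (Set.mem_range_self _)) _) (ih g)
  rw [f.as_sum]
  apply Submodule.sum_mem
  intro d hd
  have hdeg : ∑ i ∈ d.support, d i = t := by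
    have := hf (Finsupp.mem_support_iff.mp hd)
    simpa [Finsupp.weight_apply, Finsupp.sum] using this
  rw [monomial_eq, ← hdeg]
  exact Ideal.mul_mem_left _ _ (by simpa [Finsupp.prod] using key d.support d)

lemma hilbFn_eq_zero_iff {N : ℕ} (I : Ideal (MvPolynomial (Fin N) K)) (t : ℕ) :
    hilbFn K I t = 0 ↔ homogeneousSubmodule (Fin N) K t ≤ I.restrictScalars K := by
  rw [hilbFn, Nat.sub_eq_zero_iff_le]
  constructor
  · intro h
    have := Submodule.eq_of_le_of_finrank_le (inf_le_left :
      homogeneousSubmodule (Fin N) K t ⊓ I.restrictScalars K ≤ _) h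
    rw [← this] -- goal?
    exact inf_le_right
  · intro h
    rw [gradedDim, inf_eq_left.mpr h]

lemma X_mem_sup {N : ℕ} {v w : Fin N → K} (k : Fin N) (hvk : v k ≠ 0)
    (hw : ∀ c : K, w ≠ c • v) (j : Fin N) :
    (X j : MvPolynomial (Fin N) K) ∈ pointIdeal v ⊔ pointIdeal w := by
  by_cases hall : ∀ j0 : Fin N, v k * w j0 - v j0 * w k = 0
  · exfalso
    apply hw (w k / v k)
    funext j0
    have := hall j0
    show w j0 = (w k / v k) * v j0
    rw [div_mul_eq_mul_div, eq_div_iff hvk]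
    linear_combination this
  push_neg at hall
  obtain ⟨j0, hj0⟩ := hall
  set l : MvPolynomial (Fin N) K := C (v k) * X j0 - C (v j0) * X k with hl
  have hlv : l ∈ pointIdeal v := Ideal.subset_span ⟨by
      simpa using ((isHomogeneous_X K j0).C_mul (v k)).sub ((isHomogeneous_X K k).C_mul (v j0)),
    by simp [hl, mul_comm]⟩
  have hlw : eval w l = v k * w j0 - v j0 * w k := by simp [hl]
  set c : K := v k * w j0 - v j0 * w k with hc
  have hg : (X j - C (w j / c) * l) ∈ pointIdeal w := Ideal.subset_span ⟨by
      have h1 : (X j : MvPolynomial (Fin N) K).IsHomogeneous 1 := isHomogeneous_X K j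
      have h2 : ((C (w j / c) * l : MvPolynomial (Fin N) K)).IsHomogeneous 1 := by
        have := ((isHomogeneous_X K j0).C_mul (v k)).sub ((isHomogeneous_X K k).C_mul (v j0))
        simpa using this.C_mul (w j / c)
      exact h1.sub h2,
    by simp [hlw, ← hc]; field_simp; simp⟩
  have : (X j : MvPolynomial (Fin N) K) = C (w j / c) * l + (X j - C (w j / c) * l) := by ring
  rw [this]
  exact Submodule.add_mem _ (Ideal.mem_sup_left (Ideal.mul_mem_left _ _ hlv))
    (Ideal.mem_sup_right hg)

lemma prod_le_inf_sup {ι R : Type*} [CommRing R] [DecidableEq ι] (A C : ι → Ideal R) (B : Ideal R)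
    (s : Finset ι) (h : ∀ i ∈ s, C i ≤ A i ⊔ B) :
    (∏ i ∈ s, C i) ≤ (s.inf A) ⊔ B := by
  induction s using Finset.induction with
  | empty => simp
  | @insert a s ha ih =>
    rw [Finset.prod_insert ha, Finset.inf_insert]
    calc (C a) * (∏ i ∈ s, C i) ≤ (A a ⊔ B) * ((s.inf A) ⊔ B) :=
          Ideal.mul_mono (h a (Finset.mem_insert_self a s))
            (ih fun i hi => h i (Finset.mem_insert_of_mem hi))
      _ ≤ (A a ⊓ s.inf A) ⊔ B := by
          rw [Ideal.mul_sup, Ideal.sup_mul, Ideal.sup_mul]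
          refine sup_le (sup_le ?_ ?_) (sup_le ?_ ?_)
          · exact le_sup_of_le_left Ideal.mul_le_inf
          · exact le_sup_of_le_right Ideal.mul_le_left
          · exact le_sup_of_le_right Ideal.mul_le_right
          · exact le_sup_of_le_right Ideal.mul_le_left

variable {n : ℕ}

/-- restriction to the hyperplane `X_n = 0` -/
def resMap (K : Type) [Field K] (n : ℕ) :
    MvPolynomial (Fin (n + 1)) K →ₐ[K] MvPolynomial (Fin n) K :=
  aeval (Fin.snoc X 0)

lemma resMap_homog {t : ℕ} {f : MvPolynomial (Fin (n + 1)) K} (hf : f.IsHomogeneous t) :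
    (resMap K n f).IsHomogeneous t := by
  have : ∀ i, (Fin.snoc (α := fun _ => MvPolynomial (Fin n) K) X 0 i).IsHomogeneous 1 := by
    intro i
    induction i using Fin.lastCases with
    | last => simpa using isHomogeneous_zero (Fin n) K 1
    | cast j => simpa using isHomogeneous_X K j
  simpa [resMap] using hf.aeval _ this

lemma eval_resMap (v : Fin (n + 1) → K) (w : Fin n → K) (hlast : v (Fin.last n) = 0)
    (hcast : ∀ j : Fin n, v j.castSucc = w j) (f : MvPolynomial (Fin (n + 1)) K) :
    eval w (resMap K n f) = eval v f := by
  have : eval w (resMap K n f) = aeval (R := K) (fun i => aeval (R := K) w ((Fin.snoc (α := fun _ => MvPolynomial (Fin n) K) X 0) i)) f := by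
    rw [resMap, ← comp_aeval_apply]
    rfl
  rw [this]
  have hfun : (fun i => aeval (R := K) w ((Fin.snoc (α := fun _ => MvPolynomial (Fin n) K) X 0) i)) = v := by
    funext i
    induction i using Fin.lastCases with
    | last => simp [hlast]
    | cast j => simp [hcast j]
  rw [hfun, aeval_def, eval, Algebra.algebraMap_self]
  rfl

lemma map_pointIdeal_le (v : Fin (n + 1) → K) (w : Fin n → K) (hlast : v (Fin.last n) = 0)
    (hcast : ∀ j : Fin n, v j.castSucc = w j) :
    Ideal.map (resMap K n) (pointIdeal v) ≤ pointIdeal w := by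
  rw [pointIdeal, Ideal.map_span, Ideal.span_le]
  rintro _ ⟨g, ⟨hg1, hg2⟩, rfl⟩
  exact Ideal.subset_span ⟨resMap_homog hg1, by rw [eval_resMap v w hlast hcast, hg2]⟩

lemma resMap_rename (f : MvPolynomial (Fin n) K) :
    resMap K n (rename Fin.castSucc f) = f := by
  rw [resMap, aeval_rename]
  have : (Fin.snoc (α := fun _ => MvPolynomial (Fin n) K) X 0) ∘ Fin.castSucc = X := by
    funext j; simp
  rw [this, aeval_X_left_apply]


/-- Lemma 3.2: lifting `reg(R_α/(J_α+℘_{sα}^{m_s})) > b` from the hyperplane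
`α = {X_n = 0}` to `ℙⁿ`, with `P_s = (1,0,…,0)`. -/
theorem stmt4 {K : Type} [Field K] [IsAlgClosed K] {n r : ℕ} (hn : 1 ≤ n)
    (p : Fin r → Fin (n + 1) → K) (honα : ∀ i, p i (Fin.last n) = 0)
    (hdist : ProjDistinct (Fin.snoc p (stdPt K (n + 1))))
    (m : Fin r → ℕ) (hm : ∀ i, 0 < m i) (ms : ℕ) (hms : 0 < ms) (b : ℕ)
    (q : Fin r → Fin n → K) (hq : ∀ i, ∀ j : Fin n, q i j = p i j.castSucc)
    (hgt : b < regIndex K (fatIdeal q m ⊔ pointIdeal (stdPt K n) ^ ms) 0) :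
    b < regIndex K (fatIdeal p m ⊔ pointIdeal (stdPt K (n + 1)) ^ ms) 0 := by
  classical
  set I' := fatIdeal p m ⊔ pointIdeal (stdPt K (n + 1)) ^ ms with hI'
  set I := fatIdeal q m ⊔ pointIdeal (stdPt K n) ^ ms with hI
  -- facts about the standard point
  have hstdlast : stdPt K (n + 1) (Fin.last n) = 0 := by
    simp only [stdPt, Fin.val_last]
    rw [if_neg (by omega)]
  have hstdcast : ∀ j : Fin n, stdPt K (n + 1) j.castSucc = stdPt K n j := by
    intro j; simp [stdPt, Fin.coe_castSucc]
  -- Step 1 : the restriction map sends I' into I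
  have hmaple : Ideal.map (resMap K n) I' ≤ I := by
    rw [hI', Ideal.map_sup]
    apply sup_le
    · refine le_trans ?_ le_sup_left
      rw [fatIdeal]
      refine le_iInf fun i => ?_
      refine (Ideal.map_mono (iInf_le _ i)).trans ?_
      rw [Ideal.map_pow]
      exact Ideal.pow_right_mono
        (map_pointIdeal_le (p i) (q i) (honα i) (fun j => (hq i j).symm)) _
    · refine le_trans ?_ le_sup_right
      rw [Ideal.map_pow]
      exact Ideal.pow_right_mono
        (map_pointIdeal_le (stdPt K (n + 1)) (stdPt K n) hstdlast hstdcast) _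
  -- Step 2 : transfer vanishing of the Hilbert function
  have htrans : ∀ t, hilbFn K I' t = 0 → hilbFn K I t = 0 := by
    intro t h
    rw [hilbFn_eq_zero_iff] at h ⊢
    intro f hf
    have hf' : (rename Fin.castSucc f).IsHomogeneous t :=
      (hf : f.IsHomogeneous t).rename_isHomogeneous
    have hmem : rename Fin.castSucc f ∈ I' := h hf'
    have : f ∈ Ideal.map (resMap K n) I' := by
      rw [← resMap_rename f]; exact Ideal.mem_map_of_mem _ hmem
    exact hmaple this
  -- Step 3 : the set for I' is nonempty
  set T := ∑ i : Fin r, (m i + ms) with hT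
  have hTmem : hilbFn K I' T = 0 := by
    rw [hilbFn_eq_zero_iff]
    intro f hf
    set P := Ideal.span (Set.range (X : Fin (n + 1) → MvPolynomial (Fin (n + 1)) K)) with hP
    have h1 : f ∈ P ^ T := homog_mem_pow_span hf
    have h2 : P ^ T = ∏ i : Fin r, P ^ (m i + ms) := by
      rw [Finset.prod_pow_eq_pow_sum]
    have hbound : ∀ i : Fin r,
        P ^ (m i + ms) ≤ pointIdeal (p i) ^ (m i) ⊔ pointIdeal (stdPt K (n + 1)) ^ ms := by
      intro i
      have hPle : P ≤ pointIdeal (p i) ⊔ pointIdeal (stdPt K (n + 1)) := by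
        rw [hP, Ideal.span_le]
        rintro _ ⟨j, rfl⟩
        rw [sup_comm]
        refine X_mem_sup (0 : Fin (n + 1)) ?_ ?_ j
        · simp [stdPt]
        · intro c
          have := hdist.2 (Fin.castSucc i) (Fin.last r) (Fin.castSucc_lt_last i).ne c
          simpa [Fin.snoc_castSucc, Fin.snoc_last] using this
      exact (Ideal.pow_right_mono hPle _).trans Ideal.sup_pow_add_le_pow_sup_pow
    have h3 : (∏ i : Fin r, P ^ (m i + ms)) ≤
        (Finset.univ.inf fun i => pointIdeal (p i) ^ (m i)) ⊔
          pointIdeal (stdPt K (n + 1)) ^ ms :=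
      prod_le_inf_sup _ _ _ _ (fun i _ => hbound i)
    have h4 : (Finset.univ.inf fun i => pointIdeal (p i) ^ (m i)) = fatIdeal p m := by
      rw [fatIdeal, Finset.inf_univ_eq_iInf]
    have : f ∈ I' := by
      rw [hI', ← h4]
      exact h3 (h2 ▸ h1)
    exact this
  -- Step 4 : conclude
  have hne : {t | hilbFn K I' t = 0}.Nonempty := ⟨T, hTmem⟩
  have hmem' := Nat.sInf_mem hne
  have hIle : regIndex K I 0 ≤ regIndex K I' 0 :=
    Nat.sInf_le (htrans _ hmem')
  exact lt_of_lt_of_le hgt hIle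
end
end

section
/- Let R = K[X_0,X_1,X_2], let l_1, l_2 be two distinct lines in P^2, let P_1,P_2,P_3 ∈ l_1 \ l_2, P_4,P_5 ∈ l_2 \ l_1 be distinct points, and let P_6 = (1,0,0) with ℘_6 = (X_1,X_2), P_6 ∉ l_1 ∪ l_2. Set J = ℘_1^m ∩ ... ∩ ℘_5^m for a positive integer m. Then reg(R/(J + ℘_6^m)) ≤ 3m - 1. -/
open MvPolynomial

noncomputable section

/-! ### Auxiliary lemmas -/

lemma stdPt_ne_zero (K : Type) [Field K] : stdPt K 3 ≠ 0 := by
  intro h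
  have := congrFun h 0
  simp [stdPt] at this

lemma exists_functional {K : Type} [Field K] (W : Submodule K (Fin 3 → K))
    (h1 : Module.finrank K ↥W = 2) (hst : stdPt K 3 ∉ W) :
    ∃ φ : (Fin 3 → K) →ₗ[K] K, (∀ w ∈ W, φ w = 0) ∧ φ (stdPt K 3) = 1 := by
  set v := stdPt K 3 with hv
  have hvne : v ≠ 0 := stdPt_ne_zero K
  have hdisj : Disjoint W (Submodule.span K {v}) := by
    rw [Submodule.disjoint_span_singleton]
    intro h; exact absurd h hst
  have hfin : FiniteDimensional K (Fin 3 → K) := by infer_instance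
  have hsup : W ⊔ Submodule.span K {v} = ⊤ := by
    apply Submodule.eq_top_of_finrank_eq
    have := Submodule.finrank_sup_add_finrank_inf_eq W (Submodule.span K {v})
    rw [hdisj.eq_bot] at this
    simp [h1, finrank_span_singleton hvne, Module.finrank_fin_fun] at this ⊢
    omega
  have hcompl : IsCompl W (Submodule.span K {v}) := ⟨hdisj, codisjoint_iff.mpr hsup⟩
  set e := LinearEquiv.toSpanNonzeroSingleton K (Fin 3 → K) v hvne
  set ψ : ↥(Submodule.span K {v}) →ₗ[K] K := e.symm.toLinearMap
  refine ⟨LinearMap.ofIsCompl hcompl 0 ψ, ?_, ?_⟩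
  · intro w hw
    exact LinearMap.ofIsCompl_left_apply hcompl (⟨w, hw⟩ : W)
  · have hmem : v ∈ Submodule.span K {v} := Submodule.mem_span_singleton_self v
    have := LinearMap.ofIsCompl_right_apply hcompl (φ := 0) (ψ := ψ) ⟨v, hmem⟩
    rw [this]
    show e.symm ⟨v, hmem⟩ = 1
    rw [LinearEquiv.symm_apply_eq]
    exact (LinearEquiv.toSpanNonzeroSingleton_one K (Fin 3 → K) v hvne).symm

/-- The linear form attached to a linear functional. -/
def linForm {K : Type} [Field K] (φ : (Fin 3 → K) →ₗ[K] K) : MvPolynomial (Fin 3) K :=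
  ∑ j : Fin 3, C (φ (Pi.single j 1)) * X j

lemma linForm_homog {K : Type} [Field K] (φ : (Fin 3 → K) →ₗ[K] K) :
    (linForm φ).IsHomogeneous 1 := by
  apply IsHomogeneous.sum
  intro j _
  simpa using (isHomogeneous_X K j).C_mul _

lemma eval_linForm {K : Type} [Field K] (φ : (Fin 3 → K) →ₗ[K] K) (q : Fin 3 → K) :
    eval q (linForm φ) = φ q := by
  have hq : q = ∑ j : Fin 3, q j • (Pi.single j 1 : Fin 3 → K) := by
    funext k
    simp [Pi.single_apply, Finset.sum_ite_eq]
  rw [linForm]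
  simp only [map_sum, eval_mul, eval_C, eval_X]
  conv_rhs => rw [hq]
  rw [map_sum]
  congr 1; funext j
  rw [map_smul]; simp [mul_comm]

lemma stdPt_eq_single {K : Type} [Field K] : stdPt K 3 = Pi.single (0 : Fin 3) 1 := by
  funext j
  fin_cases j <;> simp [stdPt, Pi.single_apply]

lemma linForm_decomp {K : Type} [Field K] (φ : (Fin 3 → K) →ₗ[K] K)
    (h : φ (stdPt K 3) = 1) :
    linForm φ = X 0 + (linForm φ - X 0) ∧
      linForm φ - X 0 ∈ Ideal.span ({X 1, X 2} : Set (MvPolynomial (Fin 3) K)) := by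
  constructor
  · ring
  · have h0 : φ (Pi.single (0 : Fin 3) 1) = 1 := by rw [← stdPt_eq_single]; exact h
    have : linForm φ = X 0 + (C (φ (Pi.single 1 1)) * X 1 + C (φ (Pi.single 2 1)) * X 2) := by
      rw [linForm, Fin.sum_univ_three, h0]
      simp; ring
    rw [this]
    have h1 : (X 1 : MvPolynomial (Fin 3) K) ∈ Ideal.span ({X 1, X 2} : Set (MvPolynomial (Fin 3) K)) :=
      Ideal.subset_span (by simp)
    have h2 : (X 2 : MvPolynomial (Fin 3) K) ∈ Ideal.span ({X 1, X 2} : Set (MvPolynomial (Fin 3) K)) :=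
      Ideal.subset_span (by simp)
    rw [add_sub_cancel_left]
    exact Ideal.add_mem _ (Ideal.mul_mem_left _ _ h1) (Ideal.mul_mem_left _ _ h2)

lemma key_induction {K : Type} [Field K] (m : ℕ) (hm : 0 < m)
    (u₁ u₂ : MvPolynomial (Fin 3) K)
    (P6 : Ideal (MvPolynomial (Fin 3) K))
    (hu₁ : u₁ ∈ P6) (hu₂ : u₂ ∈ P6)
    (I : Ideal (MvPolynomial (Fin 3) K))
    (hF : (X 0 + u₁) ^ m * (X 0 + u₂) ^ m ∈ I)
    (hP : P6 ^ m ≤ I) :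
    ∀ d i (g : MvPolynomial (Fin 3) K), m - i ≤ d → g ∈ P6 ^ i →
      (X 0) ^ (3 * m - 1 - i) * g ∈ I := by
  intro d
  induction d with
  | zero =>
    intro i g hd hg
    have : g ∈ P6 ^ m := Ideal.pow_le_pow_right (by omega) hg
    exact Ideal.mul_mem_left _ _ (hP this)
  | succ d ih =>
    intro i g hd hg
    by_cases him : m ≤ i
    · have : g ∈ P6 ^ m := Ideal.pow_le_pow_right him hg
      exact Ideal.mul_mem_left _ _ (hP this)
    push_neg at him
    set F := (X 0 + u₁) ^ m * (X 0 + u₂) ^ m with hFdef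
    set T : ℕ × ℕ → MvPolynomial (Fin 3) K := fun kl =>
      (u₁ ^ kl.1 * (X 0) ^ (m - kl.1) * (m.choose kl.1 : MvPolynomial (Fin 3) K)) *
      (u₂ ^ kl.2 * (X 0) ^ (m - kl.2) * (m.choose kl.2 : MvPolynomial (Fin 3) K)) *
      ((X 0) ^ (m - 1 - i) * g) with hT
    have hFg : F * ((X 0) ^ (m - 1 - i) * g)
        = ∑ kl ∈ (Finset.range (m+1)) ×ˢ (Finset.range (m+1)), T kl := by
      rw [hFdef]
      rw [show (X 0 + u₁ : MvPolynomial (Fin 3) K) = u₁ + X 0 by ring,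
          show (X 0 + u₂ : MvPolynomial (Fin 3) K) = u₂ + X 0 by ring]
      rw [add_pow, add_pow, Finset.sum_mul_sum, Finset.sum_product]
      rw [Finset.sum_mul]
      congr 1; funext k
      rw [Finset.sum_mul]
    have hmem00 : ((0 : ℕ), (0 : ℕ)) ∈ (Finset.range (m+1)) ×ˢ (Finset.range (m+1)) := by
      simp
    have hsum : ∑ kl ∈ (Finset.range (m+1)) ×ˢ (Finset.range (m+1)), T kl ∈ I := by
      rw [← hFg]; exact Ideal.mul_mem_right _ _ hF
    have hrest : ∀ kl ∈ ((Finset.range (m+1)) ×ˢ (Finset.range (m+1))).erase (0, 0),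
        T kl ∈ I := by
      intro kl hkl
      obtain ⟨hne, hkl⟩ := Finset.mem_erase.mp hkl
      obtain ⟨hk, hl⟩ := Finset.mem_product.mp hkl
      rw [Finset.mem_range] at hk hl
      set k := kl.1; set l := kl.2
      have hkl1 : 1 ≤ k + l := by
        rcases Nat.eq_zero_or_pos (k + l) with h | h
        · exfalso; apply hne; have hk0 : k = 0 := by omega
          have hl0 : l = 0 := by omega
          exact Prod.ext hk0 hl0
        · omega
      have hTeq : T kl = (X 0) ^ (3 * m - 1 - (i + k + l)) *
          ((m.choose k : MvPolynomial (Fin 3) K) * ((m.choose l : ℕ) : MvPolynomial (Fin 3) K)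
            * (u₁ ^ k * u₂ ^ l * g)) := by
        rw [hT]
        simp only
        rw [show (3 * m - 1 - (i + k + l)) = (m - k) + (m - l) + (m - 1 - i) by omega]
        rw [pow_add, pow_add]
        ring
      rw [hTeq]
      apply ih
      · omega
      · have h1 : u₁ ^ k * u₂ ^ l * g ∈ P6 ^ (k + l + i) := by
          rw [pow_add, pow_add]
          exact Ideal.mul_mem_mul
            (Ideal.mul_mem_mul (Ideal.pow_mem_pow hu₁ k) (Ideal.pow_mem_pow hu₂ l)) hg
        rw [show i + k + l = k + l + i by omega]
        exact Ideal.mul_mem_left _ _ h1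
    have hT00 : T (0, 0) = (X 0) ^ (3 * m - 1 - i) * g := by
      rw [hT]
      simp only [pow_zero, one_mul, Nat.choose_zero_right, Nat.cast_one, mul_one, Nat.sub_zero]
      rw [← mul_assoc, ← pow_add, ← pow_add]
      congr 2
      omega
    have hadd := Finset.add_sum_erase _ T hmem00
    have hfin : T (0,0) = (∑ kl ∈ (Finset.range (m+1)) ×ˢ (Finset.range (m+1)), T kl)
        - ∑ kl ∈ ((Finset.range (m+1)) ×ˢ (Finset.range (m+1))).erase (0,0), T kl := by
      rw [← hadd]; ring
    rw [← hT00, hfin]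
    exact Ideal.sub_mem _ hsum (Ideal.sum_mem _ hrest)

/-- The computation in Example 4.4: `reg(R/(J + ℘₆^m)) ≤ 3m - 1` for the six-point
configuration in `ℙ²` with `P₆ = (1,0,0)`. -/
theorem stmt14 {K : Type} [Field K] [IsAlgClosed K]
    (W₁ W₂ : Submodule K (Fin 3 → K))
    (h1 : Module.finrank K ↥W₁ = 2) (h2 : Module.finrank K ↥W₂ = 2) (hW : W₁ ≠ W₂)
    (p : Fin 5 → Fin 3 → K) (hdist : ProjDistinct (Fin.snoc p (stdPt K 3)))
    (h123 : ∀ i : Fin 5, (i : ℕ) < 3 → p i ∈ W₁ ∧ p i ∉ W₂)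
    (h45 : ∀ i : Fin 5, (i : ℕ) = 3 ∨ (i : ℕ) = 4 → p i ∈ W₂ ∧ p i ∉ W₁)
    (h6 : stdPt K 3 ∉ W₁ ∧ stdPt K 3 ∉ W₂)
    (m : ℕ) (hm : 0 < m) :
    regIndex K (fatIdeal p (fun _ => m) ⊔ pointIdeal (stdPt K 3) ^ m) 0 ≤ 3 * m - 1 := by
  set I := fatIdeal p (fun _ => m) ⊔ pointIdeal (stdPt K 3) ^ m with hI
  set P6 : Ideal (MvPolynomial (Fin 3) K) :=
    Ideal.span ({X 1, X 2} : Set (MvPolynomial (Fin 3) K)) with hP6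
  -- the two linear functionals and forms
  obtain ⟨φ₁, hφ₁W, hφ₁st⟩ := exists_functional W₁ h1 h6.1
  obtain ⟨φ₂, hφ₂W, hφ₂st⟩ := exists_functional W₂ h2 h6.2
  set ℓ₁ := linForm φ₁ with hℓ₁
  set ℓ₂ := linForm φ₂ with hℓ₂
  obtain ⟨hd₁, hu₁⟩ := linForm_decomp φ₁ hφ₁st
  obtain ⟨hd₂, hu₂⟩ := linForm_decomp φ₂ hφ₂st
  -- P6 is contained in the point ideal of stdPt
  have hP6le : P6 ≤ pointIdeal (stdPt K 3) := by
    rw [hP6, pointIdeal]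
    apply Ideal.span_mono
    intro f hf
    rcases hf with hf | hf
    · subst hf
      refine ⟨isHomogeneous_X K 1, ?_⟩
      simp [stdPt]
    · simp only [Set.mem_singleton_iff] at hf
      subst hf
      refine ⟨isHomogeneous_X K 2, ?_⟩
      simp [stdPt]
  have hP6m : P6 ^ m ≤ I := le_trans (Ideal.pow_right_mono hP6le m) le_sup_right
  -- the product of the two forms lies in the fat ideal
  have hFfat : ℓ₁ ^ m * ℓ₂ ^ m ∈ fatIdeal p (fun _ => m) := by
    rw [fatIdeal, Ideal.mem_iInf]
    intro i
    have hi5 : (i : ℕ) < 5 := i.isLt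
    by_cases hc : (i : ℕ) < 3
    · have hmem : ℓ₁ ∈ pointIdeal (p i) := by
        apply Ideal.subset_span
        exact ⟨linForm_homog φ₁, by rw [eval_linForm]; exact hφ₁W _ ((h123 i hc).1)⟩
      exact Ideal.mul_mem_right _ _ (Ideal.pow_mem_pow hmem m)
    · have hc' : (i : ℕ) = 3 ∨ (i : ℕ) = 4 := by omega
      have hmem : ℓ₂ ∈ pointIdeal (p i) := by
        apply Ideal.subset_span
        exact ⟨linForm_homog φ₂, by rw [eval_linForm]; exact hφ₂W _ ((h45 i hc').1)⟩
      exact Ideal.mul_mem_left _ _ (Ideal.pow_mem_pow hmem m)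
  have hF : (X 0 + (ℓ₁ - X 0)) ^ m * (X 0 + (ℓ₂ - X 0)) ^ m ∈ I := by
    rw [← hd₁, ← hd₂]
    exact le_sup_left (α := Ideal (MvPolynomial (Fin 3) K)) hFfat
  -- the key claim
  have key := key_induction m hm (ℓ₁ - X 0) (ℓ₂ - X 0) P6 hu₁ hu₂ I hF hP6m
  -- every homogeneous polynomial of degree 3m-1 is in I
  have hdeg : ∀ f : MvPolynomial (Fin 3) K, f.IsHomogeneous (3 * m - 1) → f ∈ I := by
    intro f hf
    rw [← support_sum_monomial_coeff f]
    apply Ideal.sum_mem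
    intro s hs
    have hcoeff : coeff s f ≠ 0 := mem_support_iff.mp hs
    have hsum : s 0 + s 1 + s 2 = 3 * m - 1 := by
      have := hf hcoeff
      rw [Finsupp.weight_apply, Finsupp.sum_fintype] at this
      · simp [Fin.sum_univ_three] at this; omega
      · simp
    rw [monomial_eq]
    have hprod : (s.prod fun n e => (X n : MvPolynomial (Fin 3) K) ^ e)
        = X 0 ^ s 0 * (X 1 ^ s 1 * X 2 ^ s 2) := by
      rw [Finsupp.prod_fintype _ _ (fun i => pow_zero _), Fin.prod_univ_three, mul_assoc]
    rw [hprod]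
    apply Ideal.mul_mem_left
    have hg : (X 1 : MvPolynomial (Fin 3) K) ^ s 1 * X 2 ^ s 2 ∈ P6 ^ (s 1 + s 2) := by
      rw [pow_add]
      exact Ideal.mul_mem_mul
        (Ideal.pow_mem_pow (Ideal.subset_span (by simp)) _)
        (Ideal.pow_mem_pow (Ideal.subset_span (by simp)) _)
    have := key m (s 1 + s 2) _ (by omega) hg
    rwa [show 3 * m - 1 - (s 1 + s 2) = s 0 by omega] at this
  -- conclude: the Hilbert function vanishes in degree 3m-1
  have hmemset : hilbFn K I (3 * m - 1) = 0 := by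
    have hle : homogeneousSubmodule (Fin 3) K (3 * m - 1) ≤ I.restrictScalars K := by
      intro f hf
      exact hdeg f ((mem_homogeneousSubmodule _ f).mp hf)
    rw [hilbFn, gradedDim, inf_eq_left.mpr hle, Nat.sub_self]
  exact Nat.sInf_le hmemset
end
end

section
/- Let Z = 2P_1 + ... + 2P_6 be six non-degenerate double points in P^3 such that no 3 of the points are collinear and no 4 lie on a plane (equivalently T(Z) = T_3(Z) = 4 > T_j(Z) for j = 1,2). Then the points are in linearly general position in P^3 and reg(Z) = 4. -/
open MvPolynomial
open Pointwise

noncomputable section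

namespace Aux

variable {K : Type} [Field K]



abbrev R (K : Type) [Field K] := MvPolynomial (Fin 4) K

/-- linear form with coefficient vector c -/
def linForm (c : Fin 4 → K) : R K := ∑ j, MvPolynomial.C (c j) * X j

lemma eval_linForm (c q : Fin 4 → K) : eval q (linForm c) = ∑ j, c j * q j := by
  simp [linForm]

lemma pderiv_linForm (c : Fin 4 → K) (j : Fin 4) :
    pderiv j (linForm c) = MvPolynomial.C (c j) := by
  classical
  rw [linForm, map_sum]
  rw [Finset.sum_eq_single j]
  · simp [pderiv_X_self]
  · intro b _ hb
    simp [pderiv_C_mul, pderiv_X_of_ne hb]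
  · simp
lemma eval_pderiv_linForm (c q : Fin 4 → K) (j : Fin 4) :
    eval q (pderiv j (linForm c)) = c j := by simp [pderiv_linForm]

lemma isHomogeneous_linForm (c : Fin 4 → K) : (linForm c).IsHomogeneous 1 := by
  apply IsHomogeneous.sum
  intro j _
  exact (isHomogeneous_X K j).C_mul (c j)

lemma linForm_mem_pointIdeal {c q : Fin 4 → K} (h : ∑ j, c j * q j = 0) :
    linForm c ∈ pointIdeal q :=
  Ideal.subset_span ⟨isHomogeneous_linForm c, by rw [eval_linForm, h]⟩

lemma eval_eq_zero_of_mem_pointIdeal {q : Fin 4 → K} {f : R K} (hf : f ∈ pointIdeal q) :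
    eval q f = 0 := by
  have : pointIdeal q ≤ RingHom.ker (eval q) := by
    rw [pointIdeal, Ideal.span_le]
    rintro g ⟨-, hg⟩
    exact hg
  exact this hf

/-- elements of ℘² have vanishing value and first partials. -/
lemma jet_of_mem_sq {q : Fin 4 → K} {f : R K} (hf : f ∈ pointIdeal q ^ 2) :
    eval q f = 0 ∧ ∀ j, eval q (pderiv j f) = 0 := by
  have hspan : pointIdeal q ^ 2 =
      Ideal.span ({f | f.IsHomogeneous 1 ∧ eval q f = 0} * {f | f.IsHomogeneous 1 ∧ eval q f = 0}) := by
    rw [pointIdeal, sq, Ideal.span_mul_span']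
  rw [hspan] at hf
  refine Submodule.span_induction ?_ ?_ ?_ ?_ hf
  · rintro x ⟨a, ⟨-, ha⟩, b, ⟨-, hb⟩, rfl⟩
    constructor
    · simp [ha, hb]
    · intro j; simp [pderiv_mul, ha, hb]
  · simp
  · rintro x y - - ⟨hx1, hx2⟩ ⟨hy1, hy2⟩
    exact ⟨by simp [hx1, hy1], fun j => by simp [hx2 j, hy2 j]⟩
  · rintro r x - ⟨hx1, hx2⟩
    constructor
    · simp [smul_eq_mul, hx1]
    · intro j
      simp only [smul_eq_mul, pderiv_mul, map_add, map_mul, hx1, hx2 j, mul_zero, zero_mul,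
        add_zero, zero_add]

lemma mul_mul_mem_sq {q : Fin 4 → K} {f g : R K} (u : R K)
    (hf : f ∈ pointIdeal q) (hg : g ∈ pointIdeal q) : f * g * u ∈ pointIdeal q ^ 2 := by
  rw [mul_comm]
  exact Ideal.mul_mem_left _ u (by rw [sq]; exact Ideal.mul_mem_mul hf hg)


def expt (t : ℕ) : Type := {g : Fin 4 → Fin (t+1) // ∑ j, (g j : ℕ) = t}

instance (t : ℕ) : Fintype (expt t) := by unfold expt; infer_instance
instance (t : ℕ) : DecidableEq (expt t) := by unfold expt; infer_instance

def exptFinsupp {t : ℕ} (g : expt t) : Fin 4 →₀ ℕ :=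
  Finsupp.equivFunOnFinite.symm (fun j => (g.1 j : ℕ))

lemma exptFinsupp_degree {t : ℕ} (g : expt t) : (exptFinsupp g).degree = t := by
  rw [Finsupp.degree_apply]
  rw [Finset.sum_subset (Finset.subset_univ _)]
  · exact g.2
  · intro x _ hx
    simpa [exptFinsupp] using Finsupp.notMem_support_iff.mp hx

lemma exptFinsupp_injective {t : ℕ} : Function.Injective (exptFinsupp (t := t)) := by
  intro a b hab
  have : ∀ j, ((a.1 j : ℕ)) = (b.1 j : ℕ) := fun j => by
    have := congrArg (fun d => d j) (congrArg Finsupp.equivFunOnFinite hab)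
    simpa [exptFinsupp] using this
  apply Subtype.ext
  funext j
  exact Fin.val_injective (this j)

def monoB (t : ℕ) (g : expt t) : R K := monomial (exptFinsupp g) 1

lemma linearIndependent_monoB (t : ℕ) : LinearIndependent K (monoB (K := K) t) := by
  have := (basisMonomials (Fin 4) K).linearIndependent
  have h : monoB (K := K) t = (basisMonomials (Fin 4) K) ∘ exptFinsupp := by
    funext g; simp [monoB, coe_basisMonomials]
  rw [h]
  exact this.comp _ exptFinsupp_injective

lemma span_monoB (t : ℕ) :
    Submodule.span K (Set.range (monoB (K := K) t)) = homogeneousSubmodule (Fin 4) K t := by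
  apply le_antisymm
  · rw [Submodule.span_le]
    rintro x ⟨g, rfl⟩
    exact isHomogeneous_monomial 1 (exptFinsupp_degree g)
  · intro f hf
    rw [homogeneousSubmodule_eq_finsupp_supported, AddMonoidAlgebra.mem_supported] at hf
    rw [MvPolynomial.as_sum f]
    apply Submodule.sum_mem
    intro d hd
    have hdeg : d.degree = t := hf hd
    have hle : ∀ j, d j ≤ t := by
      intro j
      rw [← hdeg, Finsupp.degree_apply]
      by_cases h : j ∈ d.support
      · exact Finset.single_le_sum (fun i _ => Nat.zero_le _) h
      · rw [Finsupp.notMem_support_iff.mp h]; exact Nat.zero_le _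
    have hsum : ∑ j : Fin 4, ((⟨d j, Nat.lt_succ_of_le (hle j)⟩ : Fin (t+1)) : ℕ) = t := by
      show ∑ j : Fin 4, d j = t
      rw [← hdeg, Finsupp.degree_apply]
      exact (Finset.sum_subset (Finset.subset_univ _) (fun x _ hx => by
        simpa using Finsupp.notMem_support_iff.mp hx)).symm
    set g : expt t := ⟨fun j => ⟨d j, Nat.lt_succ_of_le (hle j)⟩, hsum⟩ with hg
    have hdg : exptFinsupp g = d := by
      ext j; simp [exptFinsupp, hg]
    have : monomial d (coeff d f) = (coeff d f) • monoB t g := by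
      rw [monoB, hdg, smul_monomial, smul_eq_mul, mul_one]
    rw [this]
    exact Submodule.smul_mem _ _ (Submodule.subset_span ⟨g, rfl⟩)

instance hFD (t : ℕ) : FiniteDimensional K ↥(homogeneousSubmodule (Fin 4) K t) := by
  rw [← span_monoB]
  exact FiniteDimensional.span_of_finite K (Set.finite_range _)

lemma finrank_h (t : ℕ) :
    Module.finrank K ↥(homogeneousSubmodule (Fin 4) K t) = Fintype.card (expt t) := by
  rw [← span_monoB, finrank_span_eq_card (linearIndependent_monoB t)]

lemma card_expt_four : Fintype.card (expt 4) = 35 := by decide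
lemma card_expt_le (t : ℕ) (ht : t ≤ 3) : Fintype.card (expt t) ≤ 20 := by
  interval_cases t <;> decide

lemma finrank_h4 : Module.finrank K ↥(homogeneousSubmodule (Fin 4) K 4) = 35 := by
  rw [finrank_h, card_expt_four]



def linFormₗ : (Fin 4 → K) →ₗ[K] R K where
  toFun := linForm
  map_add' c c' := by simp [linForm, add_mul, Finset.sum_add_distrib]
  map_smul' a c := by
    simp [linForm, Finset.smul_sum, smul_eq_C_mul, mul_assoc, C_mul]

def delta (a : Fin 4) : Fin 4 → K := fun j => if j = a then 1 else 0

lemma linForm_single (j : Fin 4) : linForm (delta j : Fin 4 → K) = X j := by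
  classical
  rw [linForm, Finset.sum_eq_single j]
  · simp [delta]
  · intro b _ hb; simp [delta, hb]
  · simp

/-- extract two distinct factors from a product over `Fin 4`. -/
lemma prod_eq_two_factors (f : Fin 4 → R K) {t1 t2 : Fin 4} (h : t1 ≠ t2) :
    ∏ t, f t = f t1 * f t2 * ∏ t ∈ (Finset.univ.erase t1).erase t2, f t := by
  rw [mul_assoc,
    Finset.mul_prod_erase _ f (Finset.mem_erase.mpr ⟨h.symm, Finset.mem_univ t2⟩),
    Finset.mul_prod_erase _ f (Finset.mem_univ t1)]

lemma prod_mem_sq {q : Fin 4 → K} (f : Fin 4 → R K) {t1 t2 : Fin 4} (h : t1 ≠ t2)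
    (h1 : f t1 ∈ pointIdeal q) (h2 : f t2 ∈ pointIdeal q) :
    ∏ t, f t ∈ pointIdeal q ^ 2 := by
  rw [prod_eq_two_factors f h]
  exact mul_mul_mem_sq _ h1 h2

section Point
variable (q : Fin 4 → K)

/-- a choice of basis of `K⁴` adapted to `q`. -/
def adapt (j0 : Fin 4) : Fin 4 → Fin 4 → K := fun k =>
  Fin.cases (motive := fun _ => Fin 4 → K) (delta j0)
    (fun k' => q j0 • delta (j0.succAbove k')
      - q (j0.succAbove k') • delta j0) k

@[simp] lemma adapt_zero (j0 : Fin 4) : adapt q j0 0 = (delta j0 : Fin 4 → K) := rfl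
@[simp] lemma adapt_succ (j0 : Fin 4) (k : Fin 3) :
    adapt q j0 k.succ = q j0 • (delta (j0.succAbove k) : Fin 4 → K)
      - q (j0.succAbove k) • (delta j0 : Fin 4 → K) := by
  rw [adapt, Fin.cases_succ]

lemma sum_single_mul (a : Fin 4) (c : K) (v : Fin 4 → K) :
    ∑ j, (c • (delta a : Fin 4 → K)) j * v j = c * v a := by
  classical
  rw [Finset.sum_eq_single a] <;>
    simp +contextual [delta]

lemma adapt_succ_orth (j0 : Fin 4) (k : Fin 3) :
    ∑ j, adapt q j0 k.succ j * q j = 0 := by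
  simp only [adapt_succ, Pi.sub_apply, sub_mul]
  rw [Finset.sum_sub_distrib, sum_single_mul, sum_single_mul]
  ring

lemma X_mem_span_adapt (j0 : Fin 4) (hj0 : q j0 ≠ 0) (j : Fin 4) :
    (X j : R K) ∈ Submodule.span K (Set.range (fun k => linForm (adapt q j0 k))) := by
  classical
  by_cases hj : j = j0
  · subst hj
    apply Submodule.subset_span
    exact ⟨0, by show linForm (adapt q j 0) = X j; rw [adapt_zero, linForm_single]⟩
  · obtain ⟨k, hk⟩ := Fin.exists_succAbove_eq (show j ≠ j0 from hj)
    have hsingle : (delta j : Fin 4 → K)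
        = (q j0)⁻¹ • (adapt q j0 k.succ + q j • adapt q j0 0) := by
      rw [adapt_succ, adapt_zero, hk, sub_add_cancel, smul_smul,
        inv_mul_cancel₀ hj0, one_smul]
    rw [← linForm_single]
    show linFormₗ _ ∈ _
    rw [hsingle, map_smul, map_add, map_smul]
    exact Submodule.smul_mem _ _ (Submodule.add_mem _
      (Submodule.subset_span ⟨k.succ, rfl⟩)
      (Submodule.smul_mem _ _ (Submodule.subset_span ⟨0, rfl⟩)))

/-- degree of a finsupp on `Fin 4` as a sum over all indices. -/
lemma degree_fin (d : Fin 4 →₀ ℕ) : d.degree = ∑ j, d j := by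
  rw [Finsupp.degree_apply]
  exact Finset.sum_subset (Finset.subset_univ _) (fun x _ hx => by
    simpa using Finsupp.notMem_support_iff.mp hx)

lemma monomial_mem_pow {T : Submodule K (R K)} (hT : ∀ j, (X j : R K) ∈ T) :
    ∀ (n : ℕ) (d : Fin 4 →₀ ℕ), d.degree = n → monomial d (1:K) ∈ T ^ n := by
  intro n
  induction n with
  | zero =>
    intro d hd
    rw [Finsupp.degree_eq_zero_iff] at hd
    subst hd
    rw [pow_zero]
    exact Submodule.one_le.mp le_rfl
  | succ n ih =>
    intro d hd
    classical
    have hne : d ≠ 0 := by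
      intro h; rw [h, map_zero] at hd; omega
    obtain ⟨j, hj⟩ : ∃ j, d j ≠ 0 := by
      by_contra h
      push_neg at h
      exact hne (Finsupp.ext h)
    set d' := d - Finsupp.single j 1 with hd'
    have hdd : d = d' + Finsupp.single j 1 := by
      ext j'
      rw [hd']
      simp only [Finsupp.add_apply, Finsupp.tsub_apply, Finsupp.single_apply]
      by_cases h : j = j'
      · subst h; simp; omega
      · simp [h]
    have hdeg' : d'.degree = n := by
      have h1 : d.degree = d'.degree + 1 := by
        rw [degree_fin, degree_fin, hdd]
        simp only [Finsupp.add_apply]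
        rw [Finset.sum_add_distrib]
        congr 1
        simp [Finsupp.single_apply]
      omega
    have : monomial d (1:K) = monomial d' 1 * X j := by
      rw [X, monomial_mul, mul_one, ← hdd]
    rw [this, pow_succ]
    exact Submodule.mul_mem_mul (ih d' hdeg') (hT j)

section Point2
variable (q : Fin 4 → K) (j0 : Fin 4)

/-- products of four adapted linear forms -/
def gp (w : Fin 4 → Fin 4) : R K := ∏ t, linForm (adapt q j0 (w t))

def goodSet : Set (R K) := gp q j0 '' {w | ∃ t1 t2, t1 ≠ t2 ∧ w t1 ≠ 0 ∧ w t2 ≠ 0}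

def badF (k : Fin 4) : R K := linForm (adapt q j0 0) ^ 3 * linForm (adapt q j0 k)

lemma gp_mem_sup (w : Fin 4 → Fin 4) :
    gp q j0 w ∈ Submodule.span K (goodSet q j0) ⊔ Submodule.span K (Set.range (badF q j0)) := by
  classical
  by_cases hgood : ∃ t1 t2, t1 ≠ t2 ∧ w t1 ≠ 0 ∧ w t2 ≠ 0
  · exact Submodule.mem_sup_left (Submodule.subset_span ⟨w, hgood, rfl⟩)
  · push_neg at hgood
    apply Submodule.mem_sup_right
    apply Submodule.subset_span
    by_cases h0 : ∀ t, w t = 0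
    · refine ⟨0, ?_⟩
      rw [badF, gp]
      have : ∀ t ∈ Finset.univ, linForm (adapt q j0 (w t)) = linForm (adapt q j0 0) := by
        intro t _; rw [h0 t]
      rw [Finset.prod_congr rfl this, Finset.prod_const]
      rw [Finset.card_univ, Fintype.card_fin]
      ring
    · push_neg at h0
      obtain ⟨t0, ht0⟩ := h0
      refine ⟨w t0, ?_⟩
      rw [badF, gp, ← Finset.mul_prod_erase _ _ (Finset.mem_univ t0)]
      have : ∀ t ∈ Finset.univ.erase t0, linForm (adapt q j0 (w t)) = linForm (adapt q j0 0) := by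
        intro t ht
        obtain ⟨htne, -⟩ := Finset.mem_erase.mp ht
        by_cases hwt : w t = 0
        · rw [hwt]
        · exact absurd (hgood t t0 htne hwt) ht0
      rw [Finset.prod_congr rfl this, Finset.prod_const, Finset.card_erase_of_mem (Finset.mem_univ t0)]
      rw [Finset.card_univ, Fintype.card_fin]
      ring

lemma good_isHomogeneous (w : Fin 4 → Fin 4) : (gp q j0 w).IsHomogeneous 4 := by
  have := IsHomogeneous.prod Finset.univ (fun t => linForm (adapt q j0 (w t))) (fun _ => 1)
    (fun t _ => isHomogeneous_linForm _)
  simpa [gp] using this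

lemma good_mem_sq (w : Fin 4 → Fin 4) (hw : ∃ t1 t2, t1 ≠ t2 ∧ w t1 ≠ 0 ∧ w t2 ≠ 0) :
    gp q j0 w ∈ pointIdeal q ^ 2 := by
  obtain ⟨t1, t2, hne, h1, h2⟩ := hw
  refine prod_mem_sq _ hne ?_ ?_
  · rw [← Fin.succ_pred (w t1) h1]
    exact linForm_mem_pointIdeal (adapt_succ_orth q j0 _)
  · rw [← Fin.succ_pred (w t2) h2]
    exact linForm_mem_pointIdeal (adapt_succ_orth q j0 _)

end Point2

lemma homSubmodule_le_of_monomials (t : ℕ) (T' : Submodule K (R K))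
    (h : ∀ d : Fin 4 →₀ ℕ, d.degree = t → monomial d (1:K) ∈ T') :
    homogeneousSubmodule (Fin 4) K t ≤ T' := by
  intro f hf
  rw [homogeneousSubmodule_eq_finsupp_supported, AddMonoidAlgebra.mem_supported] at hf
  rw [MvPolynomial.as_sum f]
  apply Submodule.sum_mem
  intro d hd
  have : monomial d (coeff d f) = (coeff d f) • monomial d (1:K) := by
    rw [smul_monomial, smul_eq_mul, mul_one]
  rw [this]
  exact Submodule.smul_mem _ _ (h d (hf hd))

/-- Main per-point lemma: the degree-4 graded part of `℘_q²` has dimension at least 31. -/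
lemma point_dim_lower (q : Fin 4 → K) (hq : q ≠ 0) :
    31 ≤ Module.finrank K
      ↥(homogeneousSubmodule (Fin 4) K 4 ⊓ (pointIdeal q ^ 2).restrictScalars K) := by
  classical
  obtain ⟨j0, hj0⟩ : ∃ j0, q j0 ≠ 0 := by
    by_contra h; push_neg at h; exact hq (funext h)
  set T : Submodule K (R K) :=
    Submodule.span K (Set.range (fun k => linForm (adapt q j0 k))) with hT
  have hXT : ∀ j, (X j : R K) ∈ T := X_mem_span_adapt q j0 hj0
  -- T^4 is spanned by the products gp
  have hTpow : T ^ 4 ≤ Submodule.span K (goodSet q j0) ⊔ Submodule.span K (Set.range (badF q j0)) := by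
    rw [hT, Submodule.span_pow, Submodule.span_le]
    intro x hx
    obtain ⟨w, rfl⟩ : ∃ w : Fin 4 → Fin 4, x = gp q j0 w := by
      rw [Set.mem_pow] at hx
      obtain ⟨f, hf⟩ := hx
      choose w hw using fun t => (f t).2
      refine ⟨w, ?_⟩
      rw [← hf, List.prod_ofFn, gp]
      exact (Finset.prod_congr rfl (fun t _ => (hw t))).symm
    exact gp_mem_sup q j0 w
  have hH4 : homogeneousSubmodule (Fin 4) K 4 ≤
      Submodule.span K (goodSet q j0) ⊔ Submodule.span K (Set.range (badF q j0)) := by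
    refine le_trans (homSubmodule_le_of_monomials 4 _ ?_) hTpow
    intro d hd
    exact monomial_mem_pow hXT 4 d hd
  -- the good part sits inside the graded piece of the square
  have hgood_le : Submodule.span K (goodSet q j0) ≤
      homogeneousSubmodule (Fin 4) K 4 ⊓ (pointIdeal q ^ 2).restrictScalars K := by
    rw [Submodule.span_le]
    rintro x ⟨w, hw, rfl⟩
    exact ⟨good_isHomogeneous q j0 w, good_mem_sq q j0 w hw⟩
  -- finiteness
  have hfd : FiniteDimensional K
      ↥(homogeneousSubmodule (Fin 4) K 4 ⊓ (pointIdeal q ^ 2).restrictScalars K) :=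
    Submodule.finiteDimensional_of_le inf_le_left
  have hfdG : FiniteDimensional K ↥(Submodule.span K (goodSet q j0)) :=
    Submodule.finiteDimensional_of_le (le_trans hgood_le inf_le_left)
  have hfdB : FiniteDimensional K ↥(Submodule.span K (Set.range (badF q j0))) :=
    FiniteDimensional.span_of_finite K (Set.finite_range _)
  have hBcard : Module.finrank K ↥(Submodule.span K (Set.range (badF q j0))) ≤ 4 := by
    have := finrank_span_le_card (R := K) (Set.range (badF q j0))
    refine le_trans this ?_
    rw [Set.toFinset_range]
    exact le_trans (Finset.card_image_le) (by simp)
  have h35 : (35 : ℕ) ≤ Module.finrank K ↥(Submodule.span K (goodSet q j0))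
      + Module.finrank K ↥(Submodule.span K (Set.range (badF q j0))) := by
    calc (35 : ℕ) = Module.finrank K ↥(homogeneousSubmodule (Fin 4) K 4) := finrank_h4.symm
    _ ≤ Module.finrank K ↥(Submodule.span K (goodSet q j0) ⊔ Submodule.span K (Set.range (badF q j0))) :=
        Submodule.finrank_mono hH4
    _ ≤ _ := Submodule.finrank_add_le_finrank_add_finrank _ _
  have hmono : Module.finrank K ↥(Submodule.span K (goodSet q j0)) ≤ Module.finrank K
      ↥(homogeneousSubmodule (Fin 4) K 4 ⊓ (pointIdeal q ^ 2).restrictScalars K) :=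
    Submodule.finrank_mono hgood_le
  omega

end Point

/-- dot product as a linear functional in the first argument. -/
def dotl (q : Fin 4 → K) : (Fin 4 → K) →ₗ[K] K where
  toFun c := ∑ j, c j * q j
  map_add' c c' := by simp [add_mul, Finset.sum_add_distrib]
  map_smul' a c := by simp [Finset.mul_sum, mul_assoc]

section Geom
variable (p : Fin 6 → Fin 4 → K)

lemma exists_normal (a b c : Fin 6) :
    ∃ n : Fin 4 → K, n ≠ 0 ∧ dotl (p a) n = 0 ∧ dotl (p b) n = 0 ∧ dotl (p c) n = 0 := by
  classical
  set Ψ : (Fin 4 → K) →ₗ[K] (Fin 3 → K) :=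
    LinearMap.pi (fun k => dotl (p (![a, b, c] k))) with hΨ
  have : LinearMap.ker Ψ ≠ ⊥ := by
    intro hbot
    have hinj : Function.Injective Ψ := LinearMap.ker_eq_bot.mp hbot
    have := LinearMap.finrank_le_finrank_of_injective hinj
    simp [Module.finrank_pi] at this
  obtain ⟨n, hn, hn0⟩ := Submodule.exists_mem_ne_zero_of_ne_bot this
  refine ⟨n, hn0, ?_, ?_, ?_⟩
  · exact congrFun (LinearMap.mem_ker.mp hn ▸ rfl : Ψ n = 0) 0
  · exact congrFun (LinearMap.mem_ker.mp hn ▸ rfl : Ψ n = 0) 1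
  · exact congrFun (LinearMap.mem_ker.mp hn ▸ rfl : Ψ n = 0) 2

/-- normal vector to the plane through three of the points -/
def nrm (a b c : Fin 6) : Fin 4 → K := (exists_normal p a b c).choose

lemma nrm_ne_zero (a b c : Fin 6) : nrm p a b c ≠ 0 := (exists_normal p a b c).choose_spec.1
lemma nrm_orth₁ (a b c : Fin 6) : ∑ j, nrm p a b c j * p a j = 0 :=
  (exists_normal p a b c).choose_spec.2.1
lemma nrm_orth₂ (a b c : Fin 6) : ∑ j, nrm p a b c j * p b j = 0 :=
  (exists_normal p a b c).choose_spec.2.2.1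
lemma nrm_orth₃ (a b c : Fin 6) : ∑ j, nrm p a b c j * p c j = 0 :=
  (exists_normal p a b c).choose_spec.2.2.2

variable (h4 : ∀ T : Finset (Fin 6), T.card = 4 → ¬ OnLinearSubspace p T 2)

include h4 in
/-- nonvanishing of a plane normal at a fourth point in general position -/
lemma nrm_nonzero_at {a b c l : Fin 6} {n : Fin 4 → K} (hn : n ≠ 0)
    (ha : ∑ j, n j * p a j = 0) (hb : ∑ j, n j * p b j = 0) (hc : ∑ j, n j * p c j = 0)
    (hab : a ≠ b) (hac : a ≠ c) (hal : a ≠ l) (hbc : b ≠ c) (hbl : b ≠ l) (hcl : c ≠ l) :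
    ∑ j, n j * p l j ≠ 0 := by
  classical
  intro hl
  set D : (Fin 4 → K) →ₗ[K] K :=
    { toFun := fun v => ∑ j, n j * v j
      map_add' := fun v v' => by simp [mul_add, Finset.sum_add_distrib]
      map_smul' := fun t v => by simp [Finset.mul_sum, mul_left_comm] } with hD
  have hT : ({a, b, c, l} : Finset (Fin 6)).card = 4 := by
    rw [Finset.card_insert_of_notMem (by simp [hab, hac, hal]),
      Finset.card_insert_of_notMem (by simp [hbc, hbl]),
      Finset.card_insert_of_notMem (by simp [hcl]), Finset.card_singleton]
  apply h4 _ hT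
  refine ⟨LinearMap.ker D, ?_, ?_⟩
  · have hne : LinearMap.ker D ≠ ⊤ := by
      intro htop
      obtain ⟨j, hj⟩ : ∃ j, n j ≠ 0 := by
        by_contra hno; push_neg at hno; exact hn (funext hno)
      have : D (delta j) = 0 := by
        rw [← LinearMap.mem_ker, htop]; trivial
      rw [hD] at this
      simp only [LinearMap.coe_mk, AddHom.coe_mk] at this
      rw [Finset.sum_eq_single j] at this
      · simp [delta] at this; exact hj this
      · intro b _ hbj; simp [delta, hbj]
      · simp
    have := Submodule.finrank_lt hne
    simp [Module.finrank_pi] at this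
    omega
  · intro i hi
    simp only [Finset.mem_insert, Finset.mem_singleton] at hi
    rcases hi with rfl | rfl | rfl | rfl <;>
      simp only [LinearMap.mem_ker, hD, LinearMap.coe_mk, AddHom.coe_mk] <;> assumption

/-- the table of plane normals making up the 4 quartics attached to the point `i`. -/
def quartFac (i : Fin 6) : Fin 4 → Fin 4 → (Fin 4 → K) := fun m t =>
  let a := i.succAbove 0
  let b := i.succAbove 1
  let c := i.succAbove 2
  let d := i.succAbove 3
  let e := i.succAbove 4
  ![![nrm p a b c, nrm p a d e, nrm p b d e, nrm p c d e],
    ![nrm p i a b, nrm p a c d, nrm p b c e, nrm p a d e],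
    ![nrm p i c d, nrm p a b c, nrm p a b e, nrm p c d e],
    ![nrm p i a c, nrm p a b d, nrm p b c e, nrm p b d e]] m t

def quart (i : Fin 6) (m : Fin 4) : R K := ∏ t, linForm (quartFac p i m t)

/-- each quartic is singular at all the points other than its own. -/
lemma quart_mem_sq (i : Fin 6) (m : Fin 4) (j : Fin 6) (hj : j ≠ i) :
    quart p i m ∈ pointIdeal (p j) ^ 2 := by
  obtain ⟨r, hr⟩ := Fin.exists_succAbove_eq hj
  subst hr
  have o1 := nrm_orth₁ p
  have o2 := nrm_orth₂ p
  have o3 := nrm_orth₃ p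
  fin_cases m <;> fin_cases r <;> rw [quart]
  · exact prod_mem_sq _ (show (0:Fin 4) ≠ 1 by decide)
      (linForm_mem_pointIdeal (by simpa [quartFac] using o1 (i.succAbove 0) (i.succAbove 1) (i.succAbove 2)))
      (linForm_mem_pointIdeal (by simpa [quartFac] using o1 (i.succAbove 0) (i.succAbove 3) (i.succAbove 4)))
  · exact prod_mem_sq _ (show (0:Fin 4) ≠ 2 by decide)
      (linForm_mem_pointIdeal (by simpa [quartFac] using o2 (i.succAbove 0) (i.succAbove 1) (i.succAbove 2)))
      (linForm_mem_pointIdeal (by simpa [quartFac] using o1 (i.succAbove 1) (i.succAbove 3) (i.succAbove 4)))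
  · exact prod_mem_sq _ (show (0:Fin 4) ≠ 3 by decide)
      (linForm_mem_pointIdeal (by simpa [quartFac] using o3 (i.succAbove 0) (i.succAbove 1) (i.succAbove 2)))
      (linForm_mem_pointIdeal (by simpa [quartFac] using o1 (i.succAbove 2) (i.succAbove 3) (i.succAbove 4)))
  · exact prod_mem_sq _ (show (1:Fin 4) ≠ 2 by decide)
      (linForm_mem_pointIdeal (by simpa [quartFac] using o2 (i.succAbove 0) (i.succAbove 3) (i.succAbove 4)))
      (linForm_mem_pointIdeal (by simpa [quartFac] using o2 (i.succAbove 1) (i.succAbove 3) (i.succAbove 4)))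
  · exact prod_mem_sq _ (show (1:Fin 4) ≠ 2 by decide)
      (linForm_mem_pointIdeal (by simpa [quartFac] using o3 (i.succAbove 0) (i.succAbove 3) (i.succAbove 4)))
      (linForm_mem_pointIdeal (by simpa [quartFac] using o3 (i.succAbove 1) (i.succAbove 3) (i.succAbove 4)))
  · exact prod_mem_sq _ (show (0:Fin 4) ≠ 1 by decide)
      (linForm_mem_pointIdeal (by simpa [quartFac] using o2 (i) (i.succAbove 0) (i.succAbove 1)))
      (linForm_mem_pointIdeal (by simpa [quartFac] using o1 (i.succAbove 0) (i.succAbove 2) (i.succAbove 3)))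
  · exact prod_mem_sq _ (show (0:Fin 4) ≠ 2 by decide)
      (linForm_mem_pointIdeal (by simpa [quartFac] using o3 (i) (i.succAbove 0) (i.succAbove 1)))
      (linForm_mem_pointIdeal (by simpa [quartFac] using o1 (i.succAbove 1) (i.succAbove 2) (i.succAbove 4)))
  · exact prod_mem_sq _ (show (1:Fin 4) ≠ 2 by decide)
      (linForm_mem_pointIdeal (by simpa [quartFac] using o2 (i.succAbove 0) (i.succAbove 2) (i.succAbove 3)))
      (linForm_mem_pointIdeal (by simpa [quartFac] using o2 (i.succAbove 1) (i.succAbove 2) (i.succAbove 4)))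
  · exact prod_mem_sq _ (show (1:Fin 4) ≠ 3 by decide)
      (linForm_mem_pointIdeal (by simpa [quartFac] using o3 (i.succAbove 0) (i.succAbove 2) (i.succAbove 3)))
      (linForm_mem_pointIdeal (by simpa [quartFac] using o2 (i.succAbove 0) (i.succAbove 3) (i.succAbove 4)))
  · exact prod_mem_sq _ (show (2:Fin 4) ≠ 3 by decide)
      (linForm_mem_pointIdeal (by simpa [quartFac] using o3 (i.succAbove 1) (i.succAbove 2) (i.succAbove 4)))
      (linForm_mem_pointIdeal (by simpa [quartFac] using o3 (i.succAbove 0) (i.succAbove 3) (i.succAbove 4)))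
  · exact prod_mem_sq _ (show (1:Fin 4) ≠ 2 by decide)
      (linForm_mem_pointIdeal (by simpa [quartFac] using o1 (i.succAbove 0) (i.succAbove 1) (i.succAbove 2)))
      (linForm_mem_pointIdeal (by simpa [quartFac] using o1 (i.succAbove 0) (i.succAbove 1) (i.succAbove 4)))
  · exact prod_mem_sq _ (show (1:Fin 4) ≠ 2 by decide)
      (linForm_mem_pointIdeal (by simpa [quartFac] using o2 (i.succAbove 0) (i.succAbove 1) (i.succAbove 2)))
      (linForm_mem_pointIdeal (by simpa [quartFac] using o2 (i.succAbove 0) (i.succAbove 1) (i.succAbove 4)))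
  · exact prod_mem_sq _ (show (0:Fin 4) ≠ 1 by decide)
      (linForm_mem_pointIdeal (by simpa [quartFac] using o2 (i) (i.succAbove 2) (i.succAbove 3)))
      (linForm_mem_pointIdeal (by simpa [quartFac] using o3 (i.succAbove 0) (i.succAbove 1) (i.succAbove 2)))
  · exact prod_mem_sq _ (show (0:Fin 4) ≠ 3 by decide)
      (linForm_mem_pointIdeal (by simpa [quartFac] using o3 (i) (i.succAbove 2) (i.succAbove 3)))
      (linForm_mem_pointIdeal (by simpa [quartFac] using o2 (i.succAbove 2) (i.succAbove 3) (i.succAbove 4)))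
  · exact prod_mem_sq _ (show (2:Fin 4) ≠ 3 by decide)
      (linForm_mem_pointIdeal (by simpa [quartFac] using o3 (i.succAbove 0) (i.succAbove 1) (i.succAbove 4)))
      (linForm_mem_pointIdeal (by simpa [quartFac] using o3 (i.succAbove 2) (i.succAbove 3) (i.succAbove 4)))
  · exact prod_mem_sq _ (show (0:Fin 4) ≠ 1 by decide)
      (linForm_mem_pointIdeal (by simpa [quartFac] using o2 (i) (i.succAbove 0) (i.succAbove 2)))
      (linForm_mem_pointIdeal (by simpa [quartFac] using o1 (i.succAbove 0) (i.succAbove 1) (i.succAbove 3)))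
  · exact prod_mem_sq _ (show (1:Fin 4) ≠ 2 by decide)
      (linForm_mem_pointIdeal (by simpa [quartFac] using o2 (i.succAbove 0) (i.succAbove 1) (i.succAbove 3)))
      (linForm_mem_pointIdeal (by simpa [quartFac] using o1 (i.succAbove 1) (i.succAbove 2) (i.succAbove 4)))
  · exact prod_mem_sq _ (show (0:Fin 4) ≠ 2 by decide)
      (linForm_mem_pointIdeal (by simpa [quartFac] using o3 (i) (i.succAbove 0) (i.succAbove 2)))
      (linForm_mem_pointIdeal (by simpa [quartFac] using o2 (i.succAbove 1) (i.succAbove 2) (i.succAbove 4)))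
  · exact prod_mem_sq _ (show (1:Fin 4) ≠ 3 by decide)
      (linForm_mem_pointIdeal (by simpa [quartFac] using o3 (i.succAbove 0) (i.succAbove 1) (i.succAbove 3)))
      (linForm_mem_pointIdeal (by simpa [quartFac] using o2 (i.succAbove 1) (i.succAbove 3) (i.succAbove 4)))
  · exact prod_mem_sq _ (show (2:Fin 4) ≠ 3 by decide)
      (linForm_mem_pointIdeal (by simpa [quartFac] using o3 (i.succAbove 1) (i.succAbove 2) (i.succAbove 4)))
      (linForm_mem_pointIdeal (by simpa [quartFac] using o3 (i.succAbove 1) (i.succAbove 3) (i.succAbove 4)))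

/-- value of quartic as product of plane values -/
lemma eval_quart (q : Fin 4 → K) (i : Fin 6) (m : Fin 4) :
    eval q (quart p i m) = ∏ t, ∑ j, quartFac p i m t j * q j := by
  rw [quart, map_prod]
  exact Finset.prod_congr rfl fun t _ => eval_linForm _ _

lemma eval_pderiv_prod (f : Fin 4 → R K) (q : Fin 4 → K) {t0 : Fin 4}
    (h0 : eval q (f t0) = 0) (j : Fin 4) :
    eval q (pderiv j (∏ t, f t))
      = eval q (pderiv j (f t0)) * ∏ t ∈ Finset.univ.erase t0, eval q (f t) := by
  rw [← Finset.mul_prod_erase _ f (Finset.mem_univ t0), pderiv_mul, map_add, map_mul, map_mul, h0,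
    zero_mul, add_zero, map_prod]

include h4 in
lemma nrm_val_ne {a b c l : Fin 6}
    (hab : a ≠ b) (hac : a ≠ c) (hal : a ≠ l) (hbc : b ≠ c) (hbl : b ≠ l) (hcl : c ≠ l) :
    ∑ j, nrm p a b c j * p l j ≠ 0 :=
  nrm_nonzero_at p h4 (nrm_ne_zero p a b c) (nrm_orth₁ p a b c) (nrm_orth₂ p a b c)
    (nrm_orth₃ p a b c) hab hac hal hbc hbl hcl

section OwnBlock
variable (i : Fin 6)

include h4 in
lemma quart0_val_ne : eval (p i) (quart p i 0) ≠ 0 := by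
  have hne : ∀ (r s : Fin 5), r ≠ s → i.succAbove r ≠ i.succAbove s :=
    fun r s h => Fin.succAbove_right_injective.ne h
  have hni : ∀ r : Fin 5, i.succAbove r ≠ i := fun r => Fin.succAbove_ne i r
  rw [eval_quart]
  rw [Finset.prod_ne_zero_iff]
  intro t _
  fin_cases t
  · simpa [quartFac] using nrm_val_ne p h4 (hne 0 1 (by decide)) (hne 0 2 (by decide)) (hni 0)
      (hne 1 2 (by decide)) (hni 1) (hni 2)
  · simpa [quartFac] using nrm_val_ne p h4 (hne 0 3 (by decide)) (hne 0 4 (by decide)) (hni 0)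
      (hne 3 4 (by decide)) (hni 3) (hni 4)
  · simpa [quartFac] using nrm_val_ne p h4 (hne 1 3 (by decide)) (hne 1 4 (by decide)) (hni 1)
      (hne 3 4 (by decide)) (hni 3) (hni 4)
  · simpa [quartFac] using nrm_val_ne p h4 (hne 2 3 (by decide)) (hne 2 4 (by decide)) (hni 2)
      (hne 3 4 (by decide)) (hni 3) (hni 4)

lemma quartFac_zero_val (m : Fin 4) (hm : m ≠ 0) :
    ∑ j, quartFac p i m 0 j * p i j = 0 := by
  fin_cases m
  · exact absurd rfl hm
  · simpa [quartFac] using nrm_orth₁ p i (i.succAbove 0) (i.succAbove 1)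
  · simpa [quartFac] using nrm_orth₁ p i (i.succAbove 2) (i.succAbove 3)
  · simpa [quartFac] using nrm_orth₁ p i (i.succAbove 0) (i.succAbove 2)

lemma quartG_val (m : Fin 4) (hm : m ≠ 0) : eval (p i) (quart p i m) = 0 := by
  rw [eval_quart]
  exact Finset.prod_eq_zero (Finset.mem_univ 0) (quartFac_zero_val p i m hm)

/-- the product of the values at `p i` of the three auxiliary planes of `quart i m` -/
def cval (m : Fin 4) : K := ∏ t ∈ Finset.univ.erase 0, ∑ j, quartFac p i m t j * p i j

lemma quartG_grad (m : Fin 4) (hm : m ≠ 0) (j : Fin 4) :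
    eval (p i) (pderiv j (quart p i m)) = quartFac p i m 0 j * cval p i m := by
  rw [quart, eval_pderiv_prod _ _ (t0 := 0) (by rw [eval_linForm]; exact quartFac_zero_val p i m hm),
    eval_pderiv_linForm, cval]
  congr 1
  exact Finset.prod_congr rfl fun t _ => eval_linForm _ _

include h4 in
lemma cval_ne (m : Fin 4) (hm : m ≠ 0) : cval p i m ≠ 0 := by
  have hne : ∀ (r s : Fin 5), r ≠ s → i.succAbove r ≠ i.succAbove s :=
    fun r s h => Fin.succAbove_right_injective.ne h
  have hni : ∀ r : Fin 5, i.succAbove r ≠ i := fun r => Fin.succAbove_ne i r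
  rw [cval, Finset.prod_ne_zero_iff]
  intro t ht
  fin_cases m
  · exact absurd rfl hm
  · fin_cases t
    · simp at ht
    · simpa [quartFac] using nrm_val_ne p h4 (hne 0 2 (by decide)) (hne 0 3 (by decide)) (hni 0) (hne 2 3 (by decide)) (hni 2) (hni 3)
    · simpa [quartFac] using nrm_val_ne p h4 (hne 1 2 (by decide)) (hne 1 4 (by decide)) (hni 1) (hne 2 4 (by decide)) (hni 2) (hni 4)
    · simpa [quartFac] using nrm_val_ne p h4 (hne 0 3 (by decide)) (hne 0 4 (by decide)) (hni 0) (hne 3 4 (by decide)) (hni 3) (hni 4)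
  · fin_cases t
    · simp at ht
    · simpa [quartFac] using nrm_val_ne p h4 (hne 0 1 (by decide)) (hne 0 2 (by decide)) (hni 0) (hne 1 2 (by decide)) (hni 1) (hni 2)
    · simpa [quartFac] using nrm_val_ne p h4 (hne 0 1 (by decide)) (hne 0 4 (by decide)) (hni 0) (hne 1 4 (by decide)) (hni 1) (hni 4)
    · simpa [quartFac] using nrm_val_ne p h4 (hne 2 3 (by decide)) (hne 2 4 (by decide)) (hni 2) (hne 3 4 (by decide)) (hni 3) (hni 4)
  · fin_cases t
    · simp at ht
    · simpa [quartFac] using nrm_val_ne p h4 (hne 0 1 (by decide)) (hne 0 3 (by decide)) (hni 0) (hne 1 3 (by decide)) (hni 1) (hni 3)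
    · simpa [quartFac] using nrm_val_ne p h4 (hne 1 2 (by decide)) (hne 1 4 (by decide)) (hni 1) (hne 2 4 (by decide)) (hni 2) (hni 4)
    · simpa [quartFac] using nrm_val_ne p h4 (hne 1 3 (by decide)) (hne 1 4 (by decide)) (hni 1) (hne 3 4 (by decide)) (hni 3) (hni 4)

end OwnBlock

/-- the 30 jet functionals at the six points -/
def Phi : R K →ₗ[K] (Fin 6 → Fin 5 → K) where
  toFun f := fun i => Fin.cons (eval (p i) f) (fun j => eval (p i) (pderiv j f))
  map_add' f g := by
    funext i m
    refine Fin.cases ?_ ?_ m <;> simp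
  map_smul' a f := by
    funext i m
    refine Fin.cases ?_ ?_ m <;>
      simp [smul_eq_C_mul, pderiv_C_mul]

@[simp] lemma Phi_apply_zero (f : R K) (i : Fin 6) :
    Phi p f i 0 = eval (p i) f := rfl
@[simp] lemma Phi_apply_succ (f : R K) (i : Fin 6) (j : Fin 4) :
    Phi p f i j.succ = eval (p i) (pderiv j f) := by
  have h : Phi p f i
      = Fin.cons (α := fun _ => K) (eval (p i) f) (fun j => eval (p i) (pderiv j f)) := rfl
  rw [h, Fin.cons_succ]

lemma combo (d1 d2 d3 : K) (n1 n2 n3 v : Fin 4 → K)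
    (h : ∀ j, d1 * n1 j + d2 * n2 j + d3 * n3 j = 0) :
    d1 * (∑ j, n1 j * v j) + d2 * (∑ j, n2 j * v j) + d3 * (∑ j, n3 j * v j) = 0 := by
  have hz : ∑ j, (d1 * n1 j + d2 * n2 j + d3 * n3 j) * v j = 0 :=
    Finset.sum_eq_zero fun j _ => by rw [h j, zero_mul]
  rw [Finset.mul_sum, Finset.mul_sum, Finset.mul_sum, ← hz,
    ← Finset.sum_add_distrib, ← Finset.sum_add_distrib]
  exact Finset.sum_congr rfl fun j _ => by ring

include h4 in
lemma indep :
    LinearIndependent K (fun im : Fin 6 × Fin 4 => Phi p (quart p im.1 im.2)) := by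
  classical
  rw [Fintype.linearIndependent_iff]
  intro g hg
  have key : ∀ (i : Fin 6) (m' : Fin 5),
      ∑ i' : Fin 6, ∑ m : Fin 4, g (i', m) * (Phi p (quart p i' m) i m') = 0 := by
    intro i m'
    have h1 := congrFun (congrFun hg i) m'
    simp only [Finset.sum_apply, Pi.smul_apply, smul_eq_mul, Pi.zero_apply] at h1
    rw [Fintype.sum_prod_type] at h1
    exact h1
  have cross : ∀ (i i' : Fin 6), i' ≠ i → ∀ m : Fin 4,
      (Phi p (quart p i' m) i 0 = 0) ∧ ∀ j : Fin 4, Phi p (quart p i' m) i j.succ = 0 := by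
    intro i i' hne m
    have hj := jet_of_mem_sq (quart_mem_sq p i' m i (Ne.symm hne))
    exact ⟨by simpa using hj.1, fun j => by simpa using hj.2 j⟩
  have hval : ∀ i : Fin 6, g (i, 0) = 0 := by
    intro i
    have k := key i 0
    rw [Finset.sum_eq_single i] at k
    · rw [Fin.sum_univ_four] at k
      simp only [Phi_apply_zero] at k
      rw [quartG_val p i 1 (by decide), quartG_val p i 2 (by decide),
        quartG_val p i 3 (by decide)] at k
      simp only [mul_zero, add_zero] at k
      exact (mul_eq_zero.mp k).resolve_right (quart0_val_ne p h4 i)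
    · intro i' _ hne
      exact Finset.sum_eq_zero fun m _ => by rw [(cross i i' hne m).1, mul_zero]
    · intro h; exact absurd (Finset.mem_univ i) h
  -- gradient equations
  have hgrad : ∀ (i : Fin 6) (j : Fin 4),
      g (i, 1) * (quartFac p i 1 0 j * cval p i 1)
        + g (i, 2) * (quartFac p i 2 0 j * cval p i 2)
        + g (i, 3) * (quartFac p i 3 0 j * cval p i 3) = 0 := by
    intro i j
    have k := key i j.succ
    rw [Finset.sum_eq_single i] at k
    · rw [Fin.sum_univ_four] at k
      simp only [Phi_apply_succ] at k
      rw [quartG_grad p i 1 (by decide), quartG_grad p i 2 (by decide),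
        quartG_grad p i 3 (by decide), hval i, zero_mul, zero_add] at k
      exact k
    · intro i' _ hne
      exact Finset.sum_eq_zero fun m _ => by rw [(cross i i' hne m).2 j, mul_zero]
    · intro h; exact absurd (Finset.mem_univ i) h
  -- solve block by block
  have hblock : ∀ i : Fin 6, ∀ m : Fin 4, g (i, m) = 0 := by
    intro i
    have hne : ∀ (r s : Fin 5), r ≠ s → i.succAbove r ≠ i.succAbove s :=
      fun r s h => Fin.succAbove_right_injective.ne h
    have hni : ∀ r : Fin 5, i.succAbove r ≠ i := fun r => Fin.succAbove_ne i r
    set d1 := g (i, 1) * cval p i 1 with hd1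
    set d2 := g (i, 2) * cval p i 2 with hd2
    set d3 := g (i, 3) * cval p i 3 with hd3
    have hco : ∀ j, d1 * quartFac p i 1 0 j + d2 * quartFac p i 2 0 j
        + d3 * quartFac p i 3 0 j = 0 := by
      intro j
      rw [hd1, hd2, hd3]
      linear_combination (hgrad i j)
    have hfac1 : quartFac p i 1 0 = nrm p i (i.succAbove 0) (i.succAbove 1) := by
      simp [quartFac]
    have hfac2 : quartFac p i 2 0 = nrm p i (i.succAbove 2) (i.succAbove 3) := by
      simp [quartFac]
    have hfac3 : quartFac p i 3 0 = nrm p i (i.succAbove 0) (i.succAbove 2) := by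
      simp [quartFac]
    rw [hfac1, hfac2, hfac3] at hco
    -- pair with p a
    have hpa := combo d1 d2 d3 _ _ _ (p (i.succAbove 0)) hco
    rw [nrm_orth₂ p i (i.succAbove 0) (i.succAbove 1),
      nrm_orth₂ p i (i.succAbove 0) (i.succAbove 2)] at hpa
    have hd2z : d2 = 0 := by
      have hnz : ∑ j, nrm p i (i.succAbove 2) (i.succAbove 3) j * p (i.succAbove 0) j ≠ 0 :=
        nrm_val_ne p h4 (Ne.symm (hni 2)) (Ne.symm (hni 3)) (Ne.symm (hni 0))
          (hne 2 3 (by decide)) (hne 2 0 (by decide)) (hne 3 0 (by decide))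
      have : d2 * (∑ j, nrm p i (i.succAbove 2) (i.succAbove 3) j * p (i.succAbove 0) j) = 0 := by
        linear_combination hpa
      exact (mul_eq_zero.mp this).resolve_right hnz
    -- pair with p c
    have hpc := combo d1 d2 d3 _ _ _ (p (i.succAbove 2)) hco
    rw [nrm_orth₃ p i (i.succAbove 0) (i.succAbove 2), hd2z] at hpc
    have hd1z : d1 = 0 := by
      have hnz : ∑ j, nrm p i (i.succAbove 0) (i.succAbove 1) j * p (i.succAbove 2) j ≠ 0 :=
        nrm_val_ne p h4 (Ne.symm (hni 0)) (Ne.symm (hni 1)) (Ne.symm (hni 2))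
          (hne 0 1 (by decide)) (hne 0 2 (by decide)) (hne 1 2 (by decide))
      have : d1 * (∑ j, nrm p i (i.succAbove 0) (i.succAbove 1) j * p (i.succAbove 2) j) = 0 := by
        linear_combination hpc
      exact (mul_eq_zero.mp this).resolve_right hnz
    have hd3z : d3 = 0 := by
      obtain ⟨j, hj⟩ : ∃ j, nrm p i (i.succAbove 0) (i.succAbove 2) j ≠ 0 := by
        by_contra hno; push_neg at hno
        exact nrm_ne_zero p i (i.succAbove 0) (i.succAbove 2) (funext hno)
      have := hco j
      rw [hd1z, hd2z] at this
      simp only [zero_mul, zero_add] at this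
      exact (mul_eq_zero.mp this).resolve_right hj
    intro m
    fin_cases m
    · exact hval i
    · exact (mul_eq_zero.mp hd1z).resolve_right (cval_ne p h4 i 1 (by decide))
    · exact (mul_eq_zero.mp hd2z).resolve_right (cval_ne p h4 i 2 (by decide))
    · exact (mul_eq_zero.mp hd3z).resolve_right (cval_ne p h4 i 3 (by decide))
  exact fun im => by rw [← hblock im.1 im.2]
lemma quart_isHomogeneous (i : Fin 6) (m : Fin 4) :
    quart p i m ∈ homogeneousSubmodule (Fin 4) K 4 := by
  rw [mem_homogeneousSubmodule, quart]
  have := IsHomogeneous.prod Finset.univ (fun t => linForm (quartFac p i m t)) (fun _ => 1)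
    (fun t _ => isHomogeneous_linForm _)
  simpa using this

set_option maxHeartbeats 2000000 in
include h4 in
lemma main_dim (hp0 : ∀ i, p i ≠ 0) :
    Module.finrank K ↥(homogeneousSubmodule (Fin 4) K 4 ⊓
      (⨅ i, pointIdeal (p i) ^ 2).restrictScalars K) = 11 := by
  classical
  set H4 : Submodule K (R K) := homogeneousSubmodule (Fin 4) K 4 with hH4def
  set W : Fin 6 → Submodule K (R K) :=
    (fun i => H4 ⊓ (pointIdeal (p i) ^ 2).restrictScalars K) with hW
  have hWle : ∀ i, W i ≤ H4 := fun i => inf_le_left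
  have hW31 : ∀ i, 31 ≤ Module.finrank K ↥(W i) := fun i => point_dim_lower (p i) (hp0 i)
  have hEq : H4 ⊓ (⨅ i, pointIdeal (p i) ^ 2).restrictScalars K = ⨅ i, W i := by
    ext x
    simp only [Submodule.mem_inf, Submodule.mem_iInf, Submodule.restrictScalars_mem, hW]
    exact ⟨fun h i => ⟨h.1, h.2 i⟩, fun h => ⟨(h 0).1, fun i => (h i).2⟩⟩
  -- lower bound machinery
  have step : ∀ (A B : Submodule K (R K)), A ≤ H4 → B ≤ H4 → ∀ a b : ℕ,
      a ≤ Module.finrank K ↥A → b ≤ Module.finrank K ↥B →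
      (A ⊓ B ≤ H4) ∧ a + b - 35 ≤ Module.finrank K ↥(A ⊓ B) := by
    intro A B hA hB a b ha hb
    haveI : FiniteDimensional K ↥A := Submodule.finiteDimensional_of_le hA
    haveI : FiniteDimensional K ↥B := Submodule.finiteDimensional_of_le hB
    refine ⟨le_trans inf_le_left hA, ?_⟩
    have hsup : Module.finrank K ↥(A ⊔ B) ≤ 35 := by
      rw [show (35 : ℕ) = Module.finrank K ↥H4 from finrank_h4.symm]
      exact Submodule.finrank_mono (sup_le hA hB)
    have heq := Submodule.finrank_sup_add_finrank_inf_eq A B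
    omega
  obtain ⟨le2, h2'⟩ := step (W 0) (W 1) (hWle 0) (hWle 1) 31 31 (hW31 0) (hW31 1)
  obtain ⟨le3, h3'⟩ := step _ (W 2) le2 (hWle 2) 27 31 h2' (hW31 2)
  obtain ⟨le4, h4'⟩ := step _ (W 3) le3 (hWle 3) 23 31 h3' (hW31 3)
  obtain ⟨le5, h5'⟩ := step _ (W 4) le4 (hWle 4) 19 31 h4' (hW31 4)
  obtain ⟨le6, h6'⟩ := step _ (W 5) le5 (hWle 5) 15 31 h5' (hW31 5)
  have hchain : (⨅ i, W i) = W 0 ⊓ W 1 ⊓ W 2 ⊓ W 3 ⊓ W 4 ⊓ W 5 := by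
    ext x
    simp only [Submodule.mem_iInf, Submodule.mem_inf]
    constructor
    · intro h; exact ⟨⟨⟨⟨⟨h 0, h 1⟩, h 2⟩, h 3⟩, h 4⟩, h 5⟩
    · rintro ⟨⟨⟨⟨⟨g0, g1⟩, g2⟩, g3⟩, g4⟩, g5⟩ i
      fin_cases i <;> assumption
  have hlow : 11 ≤ Module.finrank K ↥(⨅ i, W i) := by
    rw [hchain]; omega
  -- upper bound
  have hker : (⨅ i, W i) ≤ H4 ⊓ LinearMap.ker (Phi p) := by
    intro x hx
    rw [Submodule.mem_iInf] at hx
    refine ⟨(hx 0).1, LinearMap.mem_ker.mpr ?_⟩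
    funext i m'
    have hjet := jet_of_mem_sq (q := p i) ((hx i).2)
    refine Fin.cases ?_ (fun j => ?_) m'
    · simpa using hjet.1
    · simpa using hjet.2 j
  haveI : FiniteDimensional K ↥(H4 ⊓ LinearMap.ker (Phi p)) :=
    Submodule.finiteDimensional_of_le inf_le_left
  haveI : FiniteDimensional K ↥(⨅ i, W i) := by
    rw [hchain]; exact Submodule.finiteDimensional_of_le le6
  have hup1 : Module.finrank K ↥(⨅ i, W i)
      ≤ Module.finrank K ↥(H4 ⊓ LinearMap.ker (Phi p)) :=
    Submodule.finrank_mono hker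
  set Φ' := (Phi p).comp H4.subtype with hΦ'
  have hkerΦ' : LinearMap.ker Φ' = Submodule.comap H4.subtype (H4 ⊓ LinearMap.ker (Phi p)) := by
    ext x
    simp only [LinearMap.mem_ker, hΦ', LinearMap.comp_apply, Submodule.mem_comap,
      Submodule.mem_inf, Submodule.coe_subtype]
    exact ⟨fun h => ⟨x.2, h⟩, fun h => h.2⟩
  have hfr1 : Module.finrank K ↥(H4 ⊓ LinearMap.ker (Phi p))
      = Module.finrank K ↥(LinearMap.ker Φ') := by
    rw [hkerΦ']
    exact (LinearEquiv.finrank_eq (Submodule.comapSubtypeEquivOfLe inf_le_left)).symm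
  have hrank : 24 ≤ Module.finrank K ↥(LinearMap.range Φ') := by
    have hsub : Submodule.span K
        (Set.range (fun im : Fin 6 × Fin 4 => Phi p (quart p im.1 im.2)))
        ≤ LinearMap.range Φ' := by
      rw [Submodule.span_le]
      rintro y ⟨im, rfl⟩
      exact ⟨⟨quart p im.1 im.2, quart_isHomogeneous p im.1 im.2⟩, rfl⟩
    have hcard := finrank_span_eq_card (indep p h4)
    have hmono := Submodule.finrank_mono hsub
    rw [hcard] at hmono
    simpa using hmono
  have hrn := LinearMap.finrank_range_add_finrank_ker Φ'
  have h35 : Module.finrank K ↥H4 = 35 := finrank_h4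
  have hfin : Module.finrank K ↥(⨅ i, W i) = 11 := by omega
  rw [hEq]
  exact hfin

end Geom

end Aux

open Aux in
/-- Six non-degenerate double points in `ℙ³` with no 3 collinear and no 4 coplanar
are in linearly general position and `reg(Z) = 4`. -/
theorem stmt16 {K : Type} [Field K] [IsAlgClosed K]
    (p : Fin 6 → Fin 4 → K) (hdist : ProjDistinct p)
    (hspan : Submodule.span K (Set.range p) = ⊤)
    (h3 : ∀ T : Finset (Fin 6), T.card = 3 → ¬ OnLinearSubspace p T 1)
    (h4 : ∀ T : Finset (Fin 6), T.card = 4 → ¬ OnLinearSubspace p T 2) :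
    (∀ j : ℕ, j < 3 → ∀ T : Finset (Fin 6), T.card = j + 2 → ¬ OnLinearSubspace p T j) ∧
    regFat K p (fun _ => 2) = 4 := by
  constructor
  · intro j hj T hT
    interval_cases j
    · rintro ⟨W, hWr, hmem⟩
      obtain ⟨x, y, hxy, rfl⟩ := Finset.card_eq_two.mp hT
      have hx : p x ∈ W := hmem x (by simp)
      have hy : p y ∈ W := hmem y (by simp)
      have hx0 : p x ≠ 0 := hdist.1 x
      have hle : Submodule.span K {p x} ≤ W := by
        rw [Submodule.span_le]; simpa using hx
      have h1 : Module.finrank K ↥(Submodule.span K {p x}) = 1 :=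
        finrank_span_singleton hx0
      have hEq : Submodule.span K {p x} = W :=
        Submodule.eq_of_le_of_finrank_le hle (by omega)
      rw [← hEq] at hy
      obtain ⟨c, hc⟩ := Submodule.mem_span_singleton.mp hy
      exact hdist.2 y x (Ne.symm hxy) c hc.symm
    · exact h3 T hT
    · exact h4 T hT
  · have hmult : fatMult 3 (fun _ : Fin 6 => 2) = 24 := by
      simp [fatMult]
    have hdim : gradedDim K (fatIdeal p (fun _ => 2)) 4 = 11 := by
      have h := main_dim p h4 hdist.1
      exact h
    have hhilb4 : hilbFn K (fatIdeal p (fun _ => 2)) 4 = 24 := by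
      rw [hilbFn, hdim, finrank_h4]
    have hsmall : ∀ t : ℕ, t < 4 → hilbFn K (fatIdeal p (fun _ => 2)) t ≤ 20 := by
      intro t ht
      refine le_trans (Nat.sub_le _ _) ?_
      rw [finrank_h]
      exact card_expt_le t (by omega)
    rw [regFat, hmult, regIndex]
    apply le_antisymm
    · exact Nat.sInf_le hhilb4
    · refine le_csInf ⟨4, hhilb4⟩ ?_
      intro t ht
      by_contra hlt
      push_neg at hlt
      have := hsmall t (by omega)
      simp only [Set.mem_setOf_eq] at ht
      omega
end
end
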